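/- arXiv:1207.4212 — 7 statements merged into one kernel-verified Lean document; each statement's English description precedes it below -/
import Mathlib

section
/- Let A = 1/(2(1 + π²/3)) and λ ≥ 0. Define the sequence (C_l)_{l≥0} by C_0 = 0 and C_l = A · (l!)^λ / l² for l ≥ 1. Then Σ_{l=0}^{m} C_l · C_{m−l} ≤ C_m for every integer m ≥ 0. -/
open Finset

lemma sum_inv_sq_le_aux (n : ℕ) :
    ∑ l ∈ Finset.Ico 1 (n + 1), (1 : ℝ) / (l : ℝ) ^ 2 ≤ 2 - 1 / (n : ℝ) := by
  induction n with
  | zero => simp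
  | succ n ih =>
    rcases Nat.eq_zero_or_pos n with rfl | hn
    · norm_num
    · rw [Finset.sum_Ico_succ_top (by omega)]
      have hn1 : (1 : ℝ) ≤ (n : ℝ) := by exact_mod_cast hn
      have key : (1 : ℝ) / ((n : ℝ) + 1) ^ 2 ≤ 1 / (n : ℝ) - 1 / ((n : ℝ) + 1) := by
        rw [div_sub_div _ _ (by positivity) (by positivity)]
        rw [div_le_div_iff₀ (by positivity) (by positivity)]
        ring_nf
        nlinarith
      push_cast
      linarith

lemma sum_inv_sq_le (n : ℕ) :
    ∑ l ∈ Finset.Ico 1 n, (1 : ℝ) / (l : ℝ) ^ 2 ≤ 2 := by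
  rcases Nat.eq_zero_or_pos n with rfl | hn
  · simp
  · have := sum_inv_sq_le_aux (n - 1)
    rw [Nat.sub_add_cancel hn] at this
    have h0 : (0 : ℝ) ≤ 1 / ((n - 1 : ℕ) : ℝ) := by positivity
    linarith

/-- Lemma 2.2 (key lemma) of the paper, case `C₀ = 0`:
with `A = 1/(2(1+π²/3))` and `C_l = A (l!)^λ / l²` for `l ≥ 1`, `C₀ = 0`,
the sequence `(C_l)` satisfies `∑_{l=0}^m C_l C_{m-l} ≤ C_m`. -/
theorem stmt_4 (lam : ℝ) (hlam : 0 ≤ lam)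
    (A : ℝ) (hA : A = 1 / (2 * (1 + Real.pi ^ 2 / 3)))
    (C : ℕ → ℝ)
    (hC0 : C 0 = 0)
    (hC : ∀ l : ℕ, 1 ≤ l → C l = A * (l.factorial : ℝ) ^ lam / (l : ℝ) ^ 2) :
    ∀ m : ℕ, ∑ l ∈ Finset.range (m + 1), C l * C (m - l) ≤ C m := by
  have hpi2 : (9 : ℝ) ≤ Real.pi ^ 2 := by nlinarith [Real.pi_gt_three, Real.pi_pos]
  have hApos : 0 < A := by rw [hA]; positivity
  have hA8 : 8 * A ^ 2 ≤ A := by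
    have h8 : 8 * A ≤ 1 := by
      rw [hA, mul_one_div, div_le_one (by positivity)]
      linarith
    nlinarith
  intro m
  rcases Nat.eq_zero_or_pos m with rfl | hm
  · simp [hC0]
  set Fm : ℝ := (m.factorial : ℝ) ^ lam with hFmdef
  have hFm : 0 < Fm := Real.rpow_pos_of_pos (by exact_mod_cast m.factorial_pos) lam
  have hCm : C m = A * Fm / (m : ℝ) ^ 2 := hC m hm
  have hmR : (1 : ℝ) ≤ (m : ℝ) := by exact_mod_cast hm
  have hsub : Finset.Ico 1 m ⊆ Finset.range (m + 1) := by
    intro l hl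
    simp only [Finset.mem_Ico] at hl
    simp only [Finset.mem_range]
    omega
  have hzero : ∀ l ∈ Finset.range (m + 1), l ∉ Finset.Ico 1 m → C l * C (m - l) = 0 := by
    intro l hl hl'
    simp only [Finset.mem_range] at hl
    simp only [Finset.mem_Ico, not_and, not_lt] at hl'
    rcases Nat.eq_zero_or_pos l with rfl | hlpos
    · rw [hC0, zero_mul]
    · have : l = m := by omega
      subst this
      simp [hC0]
  rw [← Finset.sum_subset hsub hzero]
  -- termwise bound
  have hterm : ∀ l ∈ Finset.Ico 1 m,
      C l * C (m - l) ≤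
        2 * A ^ 2 * Fm / (m : ℝ) ^ 2 * (1 / (l : ℝ) ^ 2 + 1 / ((m - l : ℕ) : ℝ) ^ 2) := by
    intro l hl
    simp only [Finset.mem_Ico] at hl
    obtain ⟨hl1, hlm⟩ := hl
    have hml1 : 1 ≤ m - l := by omega
    set a : ℝ := (l : ℝ) with hadef
    set b : ℝ := ((m - l : ℕ) : ℝ) with hbdef
    have ha : (1 : ℝ) ≤ a := by rw [hadef]; exact_mod_cast hl1
    have hb : (1 : ℝ) ≤ b := by rw [hbdef]; exact_mod_cast hml1
    have hab : a + b = (m : ℝ) := by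
      have : l + (m - l) = m := by omega
      rw [hadef, hbdef]
      exact_mod_cast this
    have hX : (0 : ℝ) < (l.factorial : ℝ) ^ lam :=
      Real.rpow_pos_of_pos (by exact_mod_cast l.factorial_pos) lam
    have hY : (0 : ℝ) < ((m - l).factorial : ℝ) ^ lam :=
      Real.rpow_pos_of_pos (by exact_mod_cast (m - l).factorial_pos) lam
    have hXY : (l.factorial : ℝ) ^ lam * ((m - l).factorial : ℝ) ^ lam ≤ Fm := by
      rw [← Real.mul_rpow (by positivity) (by positivity)]
      refine Real.rpow_le_rpow (by positivity) ?_ hlam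
      have hdvd : l.factorial * (m - l).factorial ∣ m.factorial :=
        Nat.factorial_mul_factorial_dvd_factorial (by omega)
      exact_mod_cast Nat.le_of_dvd m.factorial_pos hdvd
    have hfrac : 1 / (a ^ 2 * b ^ 2) ≤ 2 / (m : ℝ) ^ 2 * (1 / a ^ 2 + 1 / b ^ 2) := by
      rw [← hab]
      rw [div_add_div _ _ (by positivity) (by positivity), div_mul_div_comm,
        div_le_div_iff₀ (by positivity) (by positivity)]
      nlinarith [mul_nonneg (mul_nonneg (sq_nonneg a) (sq_nonneg b)) (sq_nonneg (a - b)), sq_nonneg (a - b), sq_nonneg (a + b)]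
    rw [hC l hl1, hC (m - l) hml1]
    calc A * (l.factorial : ℝ) ^ lam / a ^ 2 * (A * ((m - l).factorial : ℝ) ^ lam / b ^ 2)
        = A ^ 2 * ((l.factorial : ℝ) ^ lam * ((m - l).factorial : ℝ) ^ lam) *
            (1 / (a ^ 2 * b ^ 2)) := by ring
      _ ≤ A ^ 2 * Fm * (2 / (m : ℝ) ^ 2 * (1 / a ^ 2 + 1 / b ^ 2)) := by
          have h1 : (0 : ℝ) ≤ 1 / (a ^ 2 * b ^ 2) := by positivity
          have h2 : A ^ 2 * ((l.factorial : ℝ) ^ lam * ((m - l).factorial : ℝ) ^ lam) ≤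
              A ^ 2 * Fm := by nlinarith
          have h3 : (0 : ℝ) ≤ A ^ 2 * Fm := by positivity
          calc A ^ 2 * ((l.factorial : ℝ) ^ lam * ((m - l).factorial : ℝ) ^ lam) *
                (1 / (a ^ 2 * b ^ 2))
              ≤ A ^ 2 * Fm * (1 / (a ^ 2 * b ^ 2)) := by
                apply mul_le_mul_of_nonneg_right h2 h1
            _ ≤ A ^ 2 * Fm * (2 / (m : ℝ) ^ 2 * (1 / a ^ 2 + 1 / b ^ 2)) :=
                mul_le_mul_of_nonneg_left hfrac h3
      _ = 2 * A ^ 2 * Fm / (m : ℝ) ^ 2 * (1 / a ^ 2 + 1 / b ^ 2) := by ring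
  have hreflect : ∑ l ∈ Finset.Ico 1 m, (1 : ℝ) / ((m - l : ℕ) : ℝ) ^ 2 =
      ∑ l ∈ Finset.Ico 1 m, (1 : ℝ) / (l : ℝ) ^ 2 := by
    apply Finset.sum_nbij' (i := fun l => m - l) (j := fun l => m - l) <;>
      intro a ha <;> simp only [Finset.mem_Ico] at * <;> first
        | omega
        | (congr 1; push_cast; congr 1; omega)
  calc ∑ l ∈ Finset.Ico 1 m, C l * C (m - l)
      ≤ ∑ l ∈ Finset.Ico 1 m,
          2 * A ^ 2 * Fm / (m : ℝ) ^ 2 * (1 / (l : ℝ) ^ 2 + 1 / ((m - l : ℕ) : ℝ) ^ 2) :=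
        Finset.sum_le_sum hterm
    _ = 2 * A ^ 2 * Fm / (m : ℝ) ^ 2 *
          (∑ l ∈ Finset.Ico 1 m, (1 : ℝ) / (l : ℝ) ^ 2 +
           ∑ l ∈ Finset.Ico 1 m, (1 : ℝ) / ((m - l : ℕ) : ℝ) ^ 2) := by
        rw [← Finset.mul_sum, ← Finset.sum_add_distrib]
    _ ≤ 2 * A ^ 2 * Fm / (m : ℝ) ^ 2 * (2 + 2) := by
        have h1 := sum_inv_sq_le m
        rw [hreflect]
        have hpos : (0 : ℝ) ≤ 2 * A ^ 2 * Fm / (m : ℝ) ^ 2 := by positivity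
        apply mul_le_mul_of_nonneg_left (by linarith) hpos
    _ = 8 * A ^ 2 * (Fm / (m : ℝ) ^ 2) := by ring
    _ ≤ A * (Fm / (m : ℝ) ^ 2) := by
        apply mul_le_mul_of_nonneg_right hA8 (by positivity)
    _ = C m := by rw [hCm]; ring
end

section
/- Let A = 1/(2(1 + π²/3)) and λ ≥ 0. Define the sequence (C_l)_{l≥0} by C_0 = A and C_l = A · (l!)^λ / l² for l ≥ 1. Then Σ_{l=0}^{m} C_l · C_{m−l} ≤ C_m for every integer m ≥ 0. -/
open Finset

private lemma sq_ineq (a b : ℝ) (ha : 0 < a) (hb : 0 < b) :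
    1 / (a ^ 2 * b ^ 2) ≤ 2 / (a + b) ^ 2 * (1 / a ^ 2 + 1 / b ^ 2) := by
  rw [div_add_div _ _ (by positivity) (by positivity), div_mul_div_comm,
    div_le_div_iff₀ (by positivity) (by positivity)]
  nlinarith [mul_nonneg (sq_nonneg (a - b)) (sq_nonneg (a * b))]

private lemma basel (s : Finset ℕ) : ∑ l ∈ s, (1 : ℝ) / (l : ℝ) ^ 2 ≤ Real.pi ^ 2 / 6 := by
  have h := hasSum_zeta_two
  calc ∑ l ∈ s, (1 : ℝ) / (l : ℝ) ^ 2 ≤ ∑' n : ℕ, (1 : ℝ) / (n : ℝ) ^ 2 :=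
        Summable.sum_le_tsum s (fun i _ => by positivity) h.summable
    _ = Real.pi ^ 2 / 6 := h.tsum_eq

private lemma reflect (f : ℕ → ℝ) (m : ℕ) :
    ∑ l ∈ Ico 1 m, f (m - l) = ∑ l ∈ Ico 1 m, f l := by
  rw [Finset.sum_Ico_eq_sum_range, Finset.sum_Ico_eq_sum_range,
    ← Finset.sum_range_reflect (fun j => f (1 + j)) (m - 1)]
  apply Finset.sum_congr rfl
  intro j hj
  rw [Finset.mem_range] at hj
  congr 1
  omega

/-- Lemma 2.2 (key lemma) of the paper, case `C₀ = A`: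
with `A = 1/(2(1+π²/3))` and `C_l = A (l!)^λ / l²` for `l ≥ 1`, `C₀ = A`,
the sequence `(C_l)` satisfies `∑_{l=0}^m C_l C_{m-l} ≤ C_m`. -/
theorem stmt_5 (lam : ℝ) (hlam : 0 ≤ lam)
    (A : ℝ) (hA : A = 1 / (2 * (1 + Real.pi ^ 2 / 3)))
    (C : ℕ → ℝ)
    (hC0 : C 0 = A)
    (hC : ∀ l : ℕ, 1 ≤ l → C l = A * (l.factorial : ℝ) ^ lam / (l : ℝ) ^ 2) :
    ∀ m : ℕ, ∑ l ∈ Finset.range (m + 1), C l * C (m - l) ≤ C m := by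
  have hpi : (0 : ℝ) < Real.pi := Real.pi_pos
  have hden : (0 : ℝ) < 1 + Real.pi ^ 2 / 3 := by positivity
  have hApos : 0 < A := by rw [hA]; positivity
  have hAle : 2 * A + 2 * A * (Real.pi ^ 2 / 3) = 1 := by
    rw [hA]; field_simp
  intro m
  match m with
  | 0 =>
    rw [Finset.sum_range_one]
    simp only [Nat.sub_zero, hC0]
    have hAhalf : A ≤ 1 / 2 := by nlinarith [mul_nonneg hApos.le (sq_nonneg Real.pi)]
    nlinarith [hApos, hAhalf]
  | Nat.succ n =>
    set m := n + 1 with hmdef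
    have hm1 : 1 ≤ m := Nat.le_add_left 1 n
    have hmR : (0 : ℝ) < (m : ℝ) := by exact_mod_cast hm1
    -- split endpoints
    have split : ∑ l ∈ Finset.range (m + 1), C l * C (m - l)
        = C 0 * C m + (∑ l ∈ Ico 1 m, C l * C (m - l)) + C m * C 0 := by
      rw [Finset.range_eq_Ico, Finset.sum_eq_sum_Ico_succ_bot (by omega),
        Finset.sum_Ico_succ_top hm1]
      simp only [Nat.sub_zero, Nat.sub_self]
      ring
    -- termwise bound on middle part
    have key : ∀ l ∈ Ico 1 m, C l * C (m - l) ≤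
        A ^ 2 * (m.factorial : ℝ) ^ lam *
          (2 / (m : ℝ) ^ 2 * (1 / (l : ℝ) ^ 2 + 1 / ((m - l : ℕ) : ℝ) ^ 2)) := by
      intro l hl
      rw [Finset.mem_Ico] at hl
      obtain ⟨hl1, hlm⟩ := hl
      have hml1 : 1 ≤ m - l := by omega
      have hlR : (0 : ℝ) < (l : ℝ) := by exact_mod_cast hl1
      have hmlR : (0 : ℝ) < ((m - l : ℕ) : ℝ) := by exact_mod_cast hml1
      have hfact : ((l.factorial : ℝ)) ^ lam * (((m - l).factorial : ℝ)) ^ lam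
          ≤ (m.factorial : ℝ) ^ lam := by
        rw [← Real.mul_rpow (by positivity) (by positivity)]
        apply Real.rpow_le_rpow (by positivity) ?_ hlam
        exact_mod_cast Nat.le_of_dvd m.factorial_pos
          (Nat.factorial_mul_factorial_dvd_factorial hlm.le)
      have hsq : 1 / ((l : ℝ) ^ 2 * ((m - l : ℕ) : ℝ) ^ 2)
          ≤ 2 / (m : ℝ) ^ 2 * (1 / (l : ℝ) ^ 2 + 1 / ((m - l : ℕ) : ℝ) ^ 2) := by
        have hadd : (l : ℝ) + ((m - l : ℕ) : ℝ) = (m : ℝ) := by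
          rw [← Nat.cast_add]
          congr 1
          omega
        have := sq_ineq (l : ℝ) ((m - l : ℕ) : ℝ) hlR hmlR
        rwa [hadd] at this
      rw [hC l hl1, hC (m - l) hml1]
      calc A * (l.factorial : ℝ) ^ lam / (l : ℝ) ^ 2 *
            (A * ((m - l).factorial : ℝ) ^ lam / ((m - l : ℕ) : ℝ) ^ 2)
          = A ^ 2 * ((l.factorial : ℝ) ^ lam * ((m - l).factorial : ℝ) ^ lam) *
            (1 / ((l : ℝ) ^ 2 * ((m - l : ℕ) : ℝ) ^ 2)) := by ring
        _ ≤ A ^ 2 * (m.factorial : ℝ) ^ lam *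
            (2 / (m : ℝ) ^ 2 * (1 / (l : ℝ) ^ 2 + 1 / ((m - l : ℕ) : ℝ) ^ 2)) := by
          apply mul_le_mul
          · exact mul_le_mul_of_nonneg_left hfact (by positivity)
          · exact hsq
          · positivity
          · positivity
    -- sum the bounds
    have hsums : ∑ l ∈ Ico 1 m, (1 / (l : ℝ) ^ 2 + 1 / ((m - l : ℕ) : ℝ) ^ 2)
        ≤ Real.pi ^ 2 / 3 := by
      rw [Finset.sum_add_distrib]
      have h1 := basel (Ico 1 m)
      have h2 : ∑ l ∈ Ico 1 m, 1 / ((m - l : ℕ) : ℝ) ^ 2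
          = ∑ l ∈ Ico 1 m, 1 / (l : ℝ) ^ 2 := reflect (fun l => 1 / (l : ℝ) ^ 2) m
      rw [h2]
      linarith
    have hT : ∑ l ∈ Ico 1 m, C l * C (m - l)
        ≤ A ^ 2 * (m.factorial : ℝ) ^ lam * (2 / (m : ℝ) ^ 2) * (Real.pi ^ 2 / 3) := by
      calc ∑ l ∈ Ico 1 m, C l * C (m - l)
          ≤ ∑ l ∈ Ico 1 m, A ^ 2 * (m.factorial : ℝ) ^ lam *
              (2 / (m : ℝ) ^ 2 * (1 / (l : ℝ) ^ 2 + 1 / ((m - l : ℕ) : ℝ) ^ 2)) :=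
            Finset.sum_le_sum key
        _ = A ^ 2 * (m.factorial : ℝ) ^ lam * (2 / (m : ℝ) ^ 2) *
              ∑ l ∈ Ico 1 m, (1 / (l : ℝ) ^ 2 + 1 / ((m - l : ℕ) : ℝ) ^ 2) := by
            rw [Finset.mul_sum]
            apply Finset.sum_congr rfl
            intro l _
            ring
        _ ≤ A ^ 2 * (m.factorial : ℝ) ^ lam * (2 / (m : ℝ) ^ 2) * (Real.pi ^ 2 / 3) := by
            apply mul_le_mul_of_nonneg_left hsums (by positivity)
    -- conclude
    have hCm : C m = A * (m.factorial : ℝ) ^ lam / (m : ℝ) ^ 2 := hC m hm1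
    have hidentity : A ^ 2 * (m.factorial : ℝ) ^ lam * (2 / (m : ℝ) ^ 2) * (Real.pi ^ 2 / 3)
        = 2 * A * (Real.pi ^ 2 / 3) * (A * (m.factorial : ℝ) ^ lam / (m : ℝ) ^ 2) := by
      field_simp
    have hDpos : 0 < A * (m.factorial : ℝ) ^ lam / (m : ℝ) ^ 2 := by positivity
    have hid2 : (2 * A + 2 * A * (Real.pi ^ 2 / 3)) *
        (A * (m.factorial : ℝ) ^ lam / (m : ℝ) ^ 2)
        = A * (m.factorial : ℝ) ^ lam / (m : ℝ) ^ 2 := by rw [hAle, one_mul]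
    rw [split, hC0, hCm]
    rw [hidentity] at hT
    nlinarith [hT, hid2]
end

section
/- Let A = 1/(2(1+π²/3)) and C_l = A/l² for l ≥ 1, with C_0 = 0. Let ρ > 0, c ≥ 1, 0 < α < ρ/2, and set κ = ρ·√(1 − α/(ρ−α)). Let (α_{n,m})_{n,m≥0} be nonnegative reals with α_{n,m} ≤ (α/c) · C_n · ρ^{−(n+m)} for all n ≥ 1 and m ≥ 0. Suppose a nonnegative sequence (φ_k)_{k≥1} satisfies φ_1 ≤ c·α_{1,0} and, for every k ≥ 2, φ_k ≤ c·( α_{k,0} + Σ_{n≥1, m≥1, n+m≤k} α_{n,m} · (φ^{∗m})_{k−n} ), where φ^{∗m} denotes the m-fold convolution of φ with itself. Then φ_l ≤ α · C_l · κ^{−l} = α A l^{−2} κ^{−l} for every l ≥ 1. -/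
open Finset

/-- Convolution of sequences indexed by the positive integers (realized as functions
on `ℕ`, the value at `0` being irrelevant): `(α∗β)_k = ∑_{l=1}^{k-1} α_l β_{k-l}`. -/
noncomputable def seqConv (a b : ℕ → ℝ) : ℕ → ℝ :=
  fun k => ∑ l ∈ Finset.Ico 1 k, a l * b (k - l)

/-- `convIter φ (m-1)` is the `m`-fold convolution power `φ^{∗m}`:
`φ^{∗1} = φ` and `φ^{∗(m+1)} = φ^{∗m} ∗ φ`. -/
noncomputable def convIter (a : ℕ → ℝ) : ℕ → ℕ → ℝ
  | 0 => a
  | m + 1 => seqConv (convIter a m) a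

lemma my_convIter_nonneg (φ : ℕ → ℝ) (h : ∀ k, 0 ≤ φ k) : ∀ m j, 0 ≤ convIter φ m j := by
  intro m
  induction m with
  | zero => exact h
  | succ m ih =>
    intro j
    show 0 ≤ seqConv (convIter φ m) φ j
    exact Finset.sum_nonneg fun l _ => mul_nonneg (ih l) (h _)

lemma my_convIter_mono (φ ψ : ℕ → ℝ) (hφ : ∀ k, 0 ≤ φ k) (hψ : ∀ k, 0 ≤ ψ k) (J : ℕ)
    (h : ∀ j, 1 ≤ j → j ≤ J → φ j ≤ ψ j) :
    ∀ m j, 1 ≤ j → j ≤ J → convIter φ m j ≤ convIter ψ m j := by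
  intro m
  induction m with
  | zero => exact h
  | succ m ih =>
    intro j hj1 hjJ
    show seqConv (convIter φ m) φ j ≤ seqConv (convIter ψ m) ψ j
    apply Finset.sum_le_sum
    intro l hl
    simp only [Finset.mem_Ico] at hl
    exact mul_le_mul (ih l hl.1 (le_trans (Nat.le_of_lt_succ (Nat.lt_succ_of_lt hl.2)) hjJ))
      (h (j - l) (by omega) (by omega)) (hφ _) (my_convIter_nonneg ψ hψ m l)

lemma my_convIter_scale (C : ℕ → ℝ) (b r : ℝ) :
    ∀ m j, convIter (fun l => b * C l * r ^ l) m j = b ^ (m + 1) * r ^ j * convIter C m j := by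
  intro m
  induction m with
  | zero =>
    intro j
    show b * C j * r ^ j = b ^ (0 + 1) * r ^ j * convIter C 0 j
    show b * C j * r ^ j = b ^ (0 + 1) * r ^ j * C j
    ring
  | succ m ih =>
    intro j
    show seqConv _ _ j = _
    unfold seqConv
    show _ = b ^ (m + 2) * r ^ j * seqConv (convIter C m) C j
    unfold seqConv
    rw [Finset.mul_sum]
    apply Finset.sum_congr rfl
    intro l hl
    simp only [Finset.mem_Ico] at hl
    rw [ih l]
    have h1 : r ^ l * r ^ (j - l) = r ^ j := by
      rw [← pow_add]; congr 1; omega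
    calc b ^ (m + 1) * r ^ l * convIter C m l * (b * C (j - l) * r ^ (j - l))
        = b ^ (m + 2) * (r ^ l * r ^ (j - l)) * (convIter C m l * C (j - l)) := by ring
      _ = b ^ (m + 2) * r ^ j * (convIter C m l * C (j - l)) := by rw [h1]

lemma my_convIter_le (C : ℕ → ℝ) (θ : ℝ) (hθ : 0 ≤ θ) (hCnn : ∀ j, 0 ≤ C j)
    (h : ∀ k, ∑ l ∈ Finset.Ico 1 k, C l * C (k - l) ≤ θ * C k) :
    ∀ m j, convIter C m j ≤ θ ^ m * C j := by
  intro m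
  induction m with
  | zero => intro j; simp [convIter]
  | succ m ih =>
    intro j
    calc convIter C (m + 1) j = ∑ l ∈ Finset.Ico 1 j, convIter C m l * C (j - l) := rfl
      _ ≤ ∑ l ∈ Finset.Ico 1 j, θ ^ m * C l * C (j - l) := by
          apply Finset.sum_le_sum
          intro l _
          exact mul_le_mul_of_nonneg_right (ih l) (hCnn _)
      _ = θ ^ m * ∑ l ∈ Finset.Ico 1 j, C l * C (j - l) := by
          rw [Finset.mul_sum]; exact Finset.sum_congr rfl fun l _ => by ring
      _ ≤ θ ^ m * (θ * C j) := mul_le_mul_of_nonneg_left (h j) (pow_nonneg hθ m)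
      _ = θ ^ (m + 1) * C j := by ring

lemma my_sum_inv_sq (k : ℕ) :
    ∑ l ∈ Finset.Ico 1 k, (1:ℝ) / (l:ℝ) ^ 2 ≤ Real.pi ^ 2 / 6 :=
  sum_le_hasSum _ (fun i _ => by positivity) hasSum_zeta_two

lemma my_convC_le (A : ℝ) (hA : 0 < A) (C : ℕ → ℝ) (hC0 : C 0 = 0)
    (hC : ∀ l : ℕ, 1 ≤ l → C l = A / (l:ℝ) ^ 2) (k : ℕ) :
    ∑ l ∈ Finset.Ico 1 k, C l * C (k - l) ≤ (2 * Real.pi ^ 2 / 3 * A) * C k := by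
  have hpi : (0:ℝ) < Real.pi ^ 2 := by positivity
  rcases Nat.lt_or_ge k 2 with hk | hk
  · interval_cases k
    · simp [hC0]
    · simp
      rw [hC 1 le_rfl]
      positivity
  · have hkR : (0:ℝ) < (k:ℝ) := by positivity
    have step1 : ∑ l ∈ Finset.Ico 1 k, C l * C (k - l) ≤
        ∑ l ∈ Finset.Ico 1 k, 2 * A ^ 2 / (k:ℝ) ^ 2 * (1 / (l:ℝ)^2 + 1 / ((k-l:ℕ):ℝ)^2) := by
      apply Finset.sum_le_sum
      intro l hl
      simp only [Finset.mem_Ico] at hl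
      set x : ℝ := (l:ℝ) with hx
      set y : ℝ := ((k-l:ℕ):ℝ) with hy
      have hx0 : (0:ℝ) < x := by rw [hx]; exact_mod_cast hl.1
      have hy0 : (0:ℝ) < y := by
        have : 1 ≤ k - l := by omega
        rw [hy]; exact_mod_cast Nat.lt_of_lt_of_le Nat.zero_lt_one this
      have hxy : x + y = (k:ℝ) := by
        rw [hx, hy, ← Nat.cast_add]
        congr 1; omega
      rw [hC l hl.1, hC (k - l) (by omega)]
      rw [← hx, ← hy, ← hxy]
      rw [← sub_nonneg]
      have key : 2 * A ^ 2 / (x + y) ^ 2 * (1 / x ^ 2 + 1 / y ^ 2) - A / x ^ 2 * (A / y ^ 2)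
          = A ^ 2 * (x - y) ^ 2 / ((x + y) ^ 2 * x ^ 2 * y ^ 2) := by
        field_simp
        ring
      rw [key]
      positivity
    have step2 : ∑ l ∈ Finset.Ico 1 k, ((1:ℝ) / ((k-l:ℕ):ℝ)^2)
        = ∑ l ∈ Finset.Ico 1 k, (1:ℝ) / (l:ℝ)^2 := by
      apply Finset.sum_nbij' (fun l => k - l) (fun l => k - l)
      · intro l hl; simp only [Finset.mem_Ico] at hl ⊢; omega
      · intro l hl; simp only [Finset.mem_Ico] at hl ⊢; omega
      · intro l hl; simp only [Finset.mem_Ico] at hl; omega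
      · intro l hl; simp only [Finset.mem_Ico] at hl; omega
      · intro l _; rfl
    calc ∑ l ∈ Finset.Ico 1 k, C l * C (k - l)
        ≤ ∑ l ∈ Finset.Ico 1 k, 2 * A ^ 2 / (k:ℝ) ^ 2 * (1 / (l:ℝ)^2 + 1 / ((k-l:ℕ):ℝ)^2) := step1
      _ = 2 * A ^ 2 / (k:ℝ) ^ 2 *
          ((∑ l ∈ Finset.Ico 1 k, (1:ℝ) / (l:ℝ)^2) + ∑ l ∈ Finset.Ico 1 k, (1:ℝ) / ((k-l:ℕ):ℝ)^2) := by
          rw [← Finset.sum_add_distrib, Finset.mul_sum]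
      _ = 2 * A ^ 2 / (k:ℝ) ^ 2 * (2 * ∑ l ∈ Finset.Ico 1 k, (1:ℝ) / (l:ℝ)^2) := by
          rw [step2]; ring
      _ ≤ 2 * A ^ 2 / (k:ℝ) ^ 2 * (2 * (Real.pi ^ 2 / 6)) := by
          apply mul_le_mul_of_nonneg_left _ (by positivity)
          have := my_sum_inv_sq k
          linarith
      _ = (2 * Real.pi ^ 2 / 3 * A) * (A / (k:ℝ)^2) := by ring
      _ = (2 * Real.pi ^ 2 / 3 * A) * C k := by rw [hC k (by omega)]

set_option maxHeartbeats 1000000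

/-- The inductive estimate of Proposition 2.1: if `α_{n,m} ≤ (α/c) Cₙ ρ^{-(n+m)}` and the
nonnegative sequence `(φ_k)` satisfies the recursive convolution inequalities coming from
`(2.9)–(2.10)`, then `φ_l ≤ α C_l κ^{-l} = α A l⁻² κ^{-l}` for all `l ≥ 1`, where
`κ = ρ√(1 − α/(ρ−α))`. -/
theorem stmt_10 (A : ℝ) (hA : A = 1 / (2 * (1 + Real.pi ^ 2 / 3)))
    (C : ℕ → ℝ) (hC0 : C 0 = 0) (hC : ∀ l : ℕ, 1 ≤ l → C l = A / (l : ℝ) ^ 2)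
    (ρ c α κ : ℝ) (hρ : 0 < ρ) (hc : 1 ≤ c) (hα : 0 < α) (hα2 : α < ρ / 2)
    (hκ : κ = ρ * Real.sqrt (1 - α / (ρ - α)))
    (a : ℕ → ℕ → ℝ) (ha_nonneg : ∀ n m, 0 ≤ a n m)
    (ha : ∀ n m : ℕ, 1 ≤ n → a n m ≤ α / c * C n / ρ ^ (n + m))
    (φ : ℕ → ℝ) (hφ_nonneg : ∀ k, 0 ≤ φ k)
    (hφ1 : φ 1 ≤ c * a 1 0)
    (hφk : ∀ k : ℕ, 2 ≤ k →
      φ k ≤ c * (a k 0 +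
        ∑ p ∈ (Finset.range (k + 1) ×ˢ Finset.range (k + 1)).filter
            (fun p => 1 ≤ p.1 ∧ 1 ≤ p.2 ∧ p.1 + p.2 ≤ k),
          a p.1 p.2 * convIter φ (p.2 - 1) (k - p.1))) :
    ∀ l : ℕ, 1 ≤ l → φ l ≤ α * C l / κ ^ l := by
  have hpi : (0:ℝ) < Real.pi ^ 2 := by positivity
  have hA0 : 0 < A := by rw [hA]; positivity
  have hc0 : (0:ℝ) < c := lt_of_lt_of_le one_pos hc
  have hρα : α < ρ - α := by linarith
  have hρα0 : 0 < ρ - α := by linarith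
  have harg : 0 < 1 - α / (ρ - α) := by
    have : α / (ρ - α) < 1 := (div_lt_one hρα0).2 hρα
    linarith
  have harg1 : 1 - α / (ρ - α) ≤ 1 := by
    have : 0 < α / (ρ - α) := div_pos hα hρα0
    linarith
  have hκ0 : 0 < κ := by rw [hκ]; exact mul_pos hρ (Real.sqrt_pos.2 harg)
  have hκρ : κ ≤ ρ := by
    rw [hκ]
    calc ρ * Real.sqrt (1 - α / (ρ - α)) ≤ ρ * 1 :=
        mul_le_mul_of_nonneg_left (Real.sqrt_le_one.2 harg1) hρ.le
      _ = ρ := mul_one ρ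
  have hκsq : (κ / ρ) ^ 2 = 1 - α / (ρ - α) := by
    rw [hκ, div_pow, mul_pow, Real.sq_sqrt harg.le]
    field_simp
  set θ : ℝ := 2 * Real.pi ^ 2 / 3 * A with hθdef
  have hθ0 : 0 < θ := by rw [hθdef]; positivity
  have hθ1 : θ < 1 := by
    rw [hθdef, hA, mul_one_div, div_lt_one (by positivity)]
    linarith
  have hαθ : α * θ < α := by nlinarith
  have hραθ : 0 < ρ - α * θ := by linarith
  have hCnn : ∀ j, 0 ≤ C j := by
    intro j
    rcases Nat.eq_zero_or_pos j with h | h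
    · rw [h, hC0]
    · rw [hC j h]; positivity
  have hconv : ∀ k, ∑ l ∈ Finset.Ico 1 k, C l * C (k - l) ≤ θ * C k := by
    intro k; rw [hθdef]; exact my_convC_le A hA0 C hC0 hC k
  clear_value θ
  have hCiter := my_convIter_le C θ hθ0.le hCnn hconv
  intro l
  induction l using Nat.strong_induction_on with
  | _ l IH =>
  intro hl
  rcases eq_or_lt_of_le hl with h1 | hk2
  · -- l = 1
    subst h1
    calc φ 1 ≤ c * a 1 0 := hφ1
      _ ≤ c * (α / c * C 1 / ρ ^ (1 + 0)) :=
          mul_le_mul_of_nonneg_left (ha 1 0 le_rfl) hc0.le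
      _ = α * C 1 / ρ := by field_simp; ring
      _ ≤ α * C 1 / κ ^ 1 := by
          rw [pow_one]
          apply div_le_div_of_nonneg_left (mul_nonneg hα.le (hCnn 1)) hκ0 hκρ
  · -- 2 ≤ l
    have hk2 : 2 ≤ l := hk2
    have hψnn : ∀ j, 0 ≤ α * C j * κ⁻¹ ^ j :=
      fun j => mul_nonneg (mul_nonneg hα.le (hCnn j)) (by positivity)
    have hIH' : ∀ j, 1 ≤ j → j ≤ l - 1 → φ j ≤ α * C j * κ⁻¹ ^ j := by
      intro j hj1 hj2
      have h := IH j (by omega) hj1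
      rwa [div_eq_mul_inv, ← inv_pow] at h
    have hmono := my_convIter_mono φ (fun j => α * C j * κ⁻¹ ^ j) hφ_nonneg hψnn (l - 1) hIH'
    -- per-term bound on the double sum
    have hsum1 : ∑ p ∈ (Finset.range (l + 1) ×ˢ Finset.range (l + 1)).filter
            (fun p => 1 ≤ p.1 ∧ 1 ≤ p.2 ∧ p.1 + p.2 ≤ l),
          a p.1 p.2 * convIter φ (p.2 - 1) (l - p.1)
        ≤ ∑ p ∈ (Finset.range (l + 1) ×ˢ Finset.range (l + 1)).filter
            (fun p => 1 ≤ p.1 ∧ 1 ≤ p.2 ∧ p.1 + p.2 ≤ l),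
          (α / c * C p.1 * C (l - p.1) * κ⁻¹ ^ (l - p.1) / ρ ^ p.1) *
            (α ^ p.2 * θ ^ (p.2 - 1) / ρ ^ p.2) := by
      apply Finset.sum_le_sum
      intro p hp
      simp only [Finset.mem_filter, Finset.mem_product, Finset.mem_range] at hp
      obtain ⟨⟨hp1r, hp2r⟩, hn1, hm1, hnm⟩ := hp
      have hb1 : a p.1 p.2 ≤ α / c * C p.1 / ρ ^ (p.1 + p.2) := ha _ _ hn1
      have hkn1 : 1 ≤ l - p.1 := by omega
      have hkn2 : l - p.1 ≤ l - 1 := by omega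
      have hb2 : convIter φ (p.2 - 1) (l - p.1)
          ≤ α ^ p.2 * κ⁻¹ ^ (l - p.1) * (θ ^ (p.2 - 1) * C (l - p.1)) := by
        calc convIter φ (p.2 - 1) (l - p.1)
            ≤ convIter (fun j => α * C j * κ⁻¹ ^ j) (p.2 - 1) (l - p.1) :=
              hmono _ _ hkn1 hkn2
          _ = α ^ (p.2 - 1 + 1) * κ⁻¹ ^ (l - p.1) * convIter C (p.2 - 1) (l - p.1) :=
              my_convIter_scale C α κ⁻¹ _ _
          _ ≤ α ^ p.2 * κ⁻¹ ^ (l - p.1) * (θ ^ (p.2 - 1) * C (l - p.1)) := by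
              rw [show p.2 - 1 + 1 = p.2 from by omega]
              exact mul_le_mul_of_nonneg_left (hCiter _ _) (by positivity)
      calc a p.1 p.2 * convIter φ (p.2 - 1) (l - p.1)
          ≤ (α / c * C p.1 / ρ ^ (p.1 + p.2)) *
              (α ^ p.2 * κ⁻¹ ^ (l - p.1) * (θ ^ (p.2 - 1) * C (l - p.1))) := by
            apply mul_le_mul hb1 hb2 (my_convIter_nonneg φ hφ_nonneg _ _)
            exact div_nonneg (mul_nonneg (by positivity) (hCnn _)) (by positivity)
        _ = (α / c * C p.1 * C (l - p.1) * κ⁻¹ ^ (l - p.1) / ρ ^ p.1) *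
              (α ^ p.2 * θ ^ (p.2 - 1) / ρ ^ p.2) := by
            rw [pow_add]
            field_simp
    -- enlarge the summation set
    have hsub : (Finset.range (l + 1) ×ˢ Finset.range (l + 1)).filter
            (fun p => 1 ≤ p.1 ∧ 1 ≤ p.2 ∧ p.1 + p.2 ≤ l)
        ⊆ Finset.Ico 1 (l + 1) ×ˢ Finset.Ico 1 (l + 1) := by
      intro p hp
      simp only [Finset.mem_filter, Finset.mem_product, Finset.mem_range,
        Finset.mem_Ico] at hp ⊢
      omega
    have hgnn : ∀ p : ℕ × ℕ,
        0 ≤ (α / c * C p.1 * C (l - p.1) * κ⁻¹ ^ (l - p.1) / ρ ^ p.1) *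
            (α ^ p.2 * θ ^ (p.2 - 1) / ρ ^ p.2) := by
      intro p
      apply mul_nonneg
      · apply div_nonneg _ (by positivity)
        exact mul_nonneg (mul_nonneg (mul_nonneg (by positivity) (hCnn _)) (hCnn _)) (by positivity)
      · positivity
    have hsum2 : ∑ p ∈ (Finset.range (l + 1) ×ˢ Finset.range (l + 1)).filter
            (fun p => 1 ≤ p.1 ∧ 1 ≤ p.2 ∧ p.1 + p.2 ≤ l),
          (α / c * C p.1 * C (l - p.1) * κ⁻¹ ^ (l - p.1) / ρ ^ p.1) *
            (α ^ p.2 * θ ^ (p.2 - 1) / ρ ^ p.2)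
        ≤ ∑ p ∈ Finset.Ico 1 (l + 1) ×ˢ Finset.Ico 1 (l + 1),
          (α / c * C p.1 * C (l - p.1) * κ⁻¹ ^ (l - p.1) / ρ ^ p.1) *
            (α ^ p.2 * θ ^ (p.2 - 1) / ρ ^ p.2) :=
      Finset.sum_le_sum_of_subset_of_nonneg hsub (fun p _ _ => hgnn p)
    have hfact : ∑ p ∈ Finset.Ico 1 (l + 1) ×ˢ Finset.Ico 1 (l + 1),
          (α / c * C p.1 * C (l - p.1) * κ⁻¹ ^ (l - p.1) / ρ ^ p.1) *
            (α ^ p.2 * θ ^ (p.2 - 1) / ρ ^ p.2)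
        = (∑ n ∈ Finset.Ico 1 (l + 1), α / c * C n * C (l - n) * κ⁻¹ ^ (l - n) / ρ ^ n) *
          (∑ m ∈ Finset.Ico 1 (l + 1), α ^ m * θ ^ (m - 1) / ρ ^ m) := by
      rw [Finset.sum_mul_sum, Finset.sum_product]
    have hu : ∑ n ∈ Finset.Ico 1 (l + 1), α / c * C n * C (l - n) * κ⁻¹ ^ (l - n) / ρ ^ n
        ≤ α / c * (θ * C l) * κ⁻¹ ^ l := by
      have hstep : ∀ n ∈ Finset.Ico 1 (l + 1),
          α / c * C n * C (l - n) * κ⁻¹ ^ (l - n) / ρ ^ n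
            ≤ α / c * (C n * C (l - n)) * κ⁻¹ ^ l := by
        intro n hn
        simp only [Finset.mem_Ico] at hn
        have h1 : (ρ ^ n)⁻¹ ≤ κ⁻¹ ^ n := by
          rw [inv_pow]
          exact inv_anti₀ (pow_pos hκ0 n) (pow_le_pow_left₀ hκ0.le hκρ n)
        have h2 : κ⁻¹ ^ (l - n) * κ⁻¹ ^ n = κ⁻¹ ^ l := by
          rw [← pow_add]; congr 1; omega
        calc α / c * C n * C (l - n) * κ⁻¹ ^ (l - n) / ρ ^ n
            = (α / c * C n * C (l - n) * κ⁻¹ ^ (l - n)) * (ρ ^ n)⁻¹ := by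
              rw [div_eq_mul_inv]
          _ ≤ (α / c * C n * C (l - n) * κ⁻¹ ^ (l - n)) * κ⁻¹ ^ n := by
              apply mul_le_mul_of_nonneg_left h1
              exact mul_nonneg (mul_nonneg (mul_nonneg (by positivity) (hCnn _)) (hCnn _))
                (by positivity)
          _ = α / c * (C n * C (l - n)) * (κ⁻¹ ^ (l - n) * κ⁻¹ ^ n) := by ring
          _ = α / c * (C n * C (l - n)) * κ⁻¹ ^ l := by rw [h2]
      calc ∑ n ∈ Finset.Ico 1 (l + 1), α / c * C n * C (l - n) * κ⁻¹ ^ (l - n) / ρ ^ n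
          ≤ ∑ n ∈ Finset.Ico 1 (l + 1), α / c * (C n * C (l - n)) * κ⁻¹ ^ l :=
            Finset.sum_le_sum hstep
        _ = α / c * (∑ n ∈ Finset.Ico 1 (l + 1), C n * C (l - n)) * κ⁻¹ ^ l := by
            rw [Finset.mul_sum, Finset.sum_mul]
        _ = α / c * (∑ n ∈ Finset.Ico 1 l, C n * C (l - n)) * κ⁻¹ ^ l := by
            rw [Finset.sum_Ico_succ_top (by omega : 1 ≤ l)]
            simp [hC0]
        _ ≤ α / c * (θ * C l) * κ⁻¹ ^ l := by
            apply mul_le_mul_of_nonneg_right _ (by positivity)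
            exact mul_le_mul_of_nonneg_left (hconv l) (by positivity)
    have hv : ∑ m ∈ Finset.Ico 1 (l + 1), α ^ m * θ ^ (m - 1) / ρ ^ m
        ≤ α / (ρ - α * θ) := by
      have hr0 : (0:ℝ) ≤ α * θ / ρ := by positivity
      have hr1 : α * θ / ρ < 1 := (div_lt_one hρ).2 (by linarith)
      have hre : ∑ m ∈ Finset.Ico 1 (l + 1), α ^ m * θ ^ (m - 1) / ρ ^ m
          = α / ρ * ∑ i ∈ Finset.range l, (α * θ / ρ) ^ i := by
        rw [Finset.sum_Ico_eq_sum_range, Finset.mul_sum]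
        simp only [Nat.add_sub_cancel]
        apply Finset.sum_congr (by congr 1) 
        intro i _
        show α ^ (1 + i) * θ ^ (1 + i - 1) / ρ ^ (1 + i) = α / ρ * (α * θ / ρ) ^ i
        rw [show 1 + i - 1 = i from by omega]
        rw [div_pow, mul_pow, pow_add, pow_add]
        field_simp
      rw [hre]
      have hgeom : ∑ i ∈ Finset.range l, (α * θ / ρ) ^ i ≤ 1 / (1 - α * θ / ρ) := by
        rw [le_div_iff₀ (by linarith)]
        have h := geom_sum_mul (α * θ / ρ) l
        have h2 : (∑ i ∈ Finset.range l, (α * θ / ρ) ^ i) * (1 - α * θ / ρ)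
            = 1 - (α * θ / ρ) ^ l := by linear_combination -h
        rw [h2]
        have := pow_nonneg hr0 l
        linarith
      calc α / ρ * ∑ i ∈ Finset.range l, (α * θ / ρ) ^ i
          ≤ α / ρ * (1 / (1 - α * θ / ρ)) :=
            mul_le_mul_of_nonneg_left hgeom (by positivity)
        _ = α / (ρ - α * θ) := by
            rw [div_mul_div_comm, mul_one]
            congr 1
            field_simp
    have hvnn : 0 ≤ ∑ m ∈ Finset.Ico 1 (l + 1), α ^ m * θ ^ (m - 1) / ρ ^ m :=
      Finset.sum_nonneg fun m _ => by positivity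
    -- key scalar inequality
    have key : (1:ℝ) / ρ ^ l + κ⁻¹ ^ l * (α * θ / (ρ - α * θ)) ≤ κ⁻¹ ^ l := by
      have h1 : (1:ℝ) / ρ ^ l = (κ / ρ) ^ l * κ⁻¹ ^ l := by
        rw [div_pow, inv_pow]
        field_simp
      have h2 : (κ / ρ) ^ l ≤ (κ / ρ) ^ 2 :=
        pow_le_pow_of_le_one (by positivity) ((div_le_one hρ).2 hκρ) hk2
      have h3 : α * θ / (ρ - α * θ) ≤ α / (ρ - α) := by
        apply div_le_div₀ hα.le (by nlinarith) hρα0 (by nlinarith)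
      have hκl : (0:ℝ) ≤ κ⁻¹ ^ l := by positivity
      calc (1:ℝ) / ρ ^ l + κ⁻¹ ^ l * (α * θ / (ρ - α * θ))
          = (κ / ρ) ^ l * κ⁻¹ ^ l + κ⁻¹ ^ l * (α * θ / (ρ - α * θ)) := by rw [h1]
        _ ≤ (κ / ρ) ^ 2 * κ⁻¹ ^ l + κ⁻¹ ^ l * (α / (ρ - α)) :=
            add_le_add (mul_le_mul_of_nonneg_right h2 hκl)
              (mul_le_mul_of_nonneg_left h3 hκl)
        _ = κ⁻¹ ^ l * ((κ / ρ) ^ 2 + α / (ρ - α)) := by ring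
        _ = κ⁻¹ ^ l := by rw [hκsq]; ring
    -- assemble
    calc φ l ≤ c * (a l 0 +
          ∑ p ∈ (Finset.range (l + 1) ×ˢ Finset.range (l + 1)).filter
              (fun p => 1 ≤ p.1 ∧ 1 ≤ p.2 ∧ p.1 + p.2 ≤ l),
            a p.1 p.2 * convIter φ (p.2 - 1) (l - p.1)) := hφk l hk2
      _ ≤ c * (α / c * C l / ρ ^ (l + 0) +
            (α / c * (θ * C l) * κ⁻¹ ^ l) * (α / (ρ - α * θ))) := by
          apply mul_le_mul_of_nonneg_left _ hc0.le
          apply add_le_add (ha l 0 (by omega))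
          refine le_trans hsum1 (le_trans hsum2 ?_)
          rw [hfact]
          apply mul_le_mul hu hv hvnn
          exact mul_nonneg (mul_nonneg (by positivity)
            (mul_nonneg hθ0.le (hCnn l))) (by positivity)
      _ = α * C l * ((1:ℝ) / ρ ^ l + κ⁻¹ ^ l * (α * θ / (ρ - α * θ))) := by
          rw [add_zero]
          field_simp
      _ ≤ α * C l * κ⁻¹ ^ l := by
          apply mul_le_mul_of_nonneg_left key (mul_nonneg hα.le (hCnn l))
      _ = α * C l / κ ^ l := by
          rw [inv_pow, ← div_eq_mul_inv]
end

section
/- Let ρ₁ > 0, ρ > 0 and let G : ℂ × ℂ^ν → ℂ^ν be holomorphic on a neighborhood of D̄_{ρ₁} × D̄_ρ^ν with G(0,0) = 0, and assume the matrix B := ∂G/∂f(0,0) is invertible. Then there exist κ > 0 and α > 0 such that there is a unique holomorphic function f* : D_κ → ℂ^ν with f*(0) = 0 and G(z, f*(z)) = 0 for all z ∈ D_κ, and its Taylor coefficients at 0, f*(z) = Σ_{k≥1} a_{0,k} z^k, satisfy ‖a_{0,k}‖ ≤ α · A · k^{−2} · κ^{−k} for all k ≥ 1, where A = 1/(2(1+π²/3)).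 -/
open Metric

lemma aux_fderiv_cont {E F : Type*} [NormedAddCommGroup E] [NormedSpace ℂ E] [ProperSpace E]
    [NormedAddCommGroup F] [NormedSpace ℂ F]
    {f : E → F} {U : Set E} (hU : IsOpen U) (hf : DifferentiableOn ℂ f U)
    {c : E} {r : ℝ} (hr : 0 < r) (hsub : closedBall c (3 * r) ⊆ U) {p : E}
    (hp : p ∈ ball c r) : ContinuousAt (fderiv ℂ f) p := by
  have hK : IsCompact (closedBall c (3 * r)) := isCompact_closedBall _ _
  have hucont := hK.uniformContinuousOn_of_continuous (hf.continuousOn.mono hsub)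
  rw [Metric.uniformContinuousOn_iff] at hucont
  rw [Metric.continuousAt_iff]
  intro ε hε
  obtain ⟨δ, hδ, huc⟩ := hucont (ε * r / 2) (by positivity)
  have hpc : dist p c < r := mem_ball.1 hp
  refine ⟨min δ (r - dist p c), lt_min hδ (by linarith), fun {q} hq => ?_⟩
  have hqp : dist q p < δ := hq.trans_le (min_le_left _ _)
  have hqball : q ∈ ball c r := by
    have : dist q p < r - dist p c := hq.trans_le (min_le_right _ _)
    have := dist_triangle q p c
    exact mem_ball.2 (by linarith)
  have hmemU : ∀ x ∈ ball c r, x ∈ U := fun x hx =>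
    hsub (closedBall_subset_closedBall (by linarith) (ball_subset_closedBall hx))
  have key : ∀ v : E, ‖v‖ ≤ 1 →
      ‖fderiv ℂ f q v - fderiv ℂ f p v‖ ≤ ε / 2 := by
    intro v hv
    have hmem : ∀ x ∈ ball c r, ∀ t : ℂ, ‖t‖ ≤ r →
        x + t • v ∈ closedBall c (3 * r) := by
      intro x hx t ht
      have h1 : dist (x + t • v) x ≤ r := by
        rw [dist_eq_norm, add_sub_cancel_left, norm_smul]
        calc ‖t‖ * ‖v‖ ≤ r * 1 := by
              exact mul_le_mul ht hv (norm_nonneg _) hr.le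
          _ = r := mul_one r
      have := dist_triangle (x + t • v) x c
      have hx' : dist x c < r := mem_ball.1 hx
      exact mem_closedBall.2 (by linarith)
    have hdiffat : ∀ x ∈ ball c r, ∀ t : ℂ, ‖t‖ ≤ r →
        DifferentiableAt ℂ (fun s : ℂ => f (x + s • v)) t := by
      intro x hx t ht
      have h1 : DifferentiableAt ℂ (fun s : ℂ => x + s • v) t :=
        (differentiableAt_id.smul_const v).const_add x
      have h2 : DifferentiableAt ℂ f (x + t • v) :=
        hf.differentiableAt (hU.mem_nhds (hsub (hmem x hx t ht)))
      exact h2.comp t h1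
    have habs : ∀ t : ℂ, t ∈ closedBall (0 : ℂ) r → ‖t‖ ≤ r := by
      intro t ht
      simpa using mem_closedBall_zero_iff.1 ht
    set h : ℂ → F := fun t => f (q + t • v) - f (p + t • v) with hh
    have hdOn : DifferentiableOn ℂ h (closedBall (0 : ℂ) r) := by
      intro t ht
      exact (((hdiffat q hqball t (habs t ht)).sub
        (hdiffat p hp t (habs t ht)))).differentiableWithinAt
    have hdc : DiffContOnCl ℂ h (ball (0 : ℂ) r) := by
      apply DifferentiableOn.diffContOnCl
      rwa [closure_ball (0 : ℂ) hr.ne']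
    have hderiv : HasDerivAt h (fderiv ℂ f q v - fderiv ℂ f p v) 0 := by
      have hx : ∀ x ∈ ball c r, HasDerivAt (fun s : ℂ => f (x + s • v))
          (fderiv ℂ f x v) 0 := by
        intro x hx
        have h1 : HasDerivAt (fun s : ℂ => x + s • v) v 0 := by
          simpa using ((hasDerivAt_id (0 : ℂ)).smul_const v).const_add x
        have h2 : HasFDerivAt f (fderiv ℂ f x) (x + (0 : ℂ) • v) := by
          simpa using (hf.differentiableAt (hU.mem_nhds (hmemU x hx))).hasFDerivAt
        exact h2.comp_hasDerivAt 0 h1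
      exact (hx q hqball).sub (hx p hp)
    have hbound : ∀ z ∈ sphere (0 : ℂ) r, ‖h z‖ ≤ ε * r / 2 := by
      intro z hz
      have hz' : ‖z‖ ≤ r := by
        simpa using (mem_sphere_zero_iff_norm.1 hz).le
      have h1 := hmem q hqball z hz'
      have h2 := hmem p hp z hz'
      have hd : dist (q + z • v) (p + z • v) < δ := by
        rwa [dist_add_right]
      have := huc _ h1 _ h2 hd
      rw [dist_eq_norm] at this
      exact this.le
    have := Complex.norm_deriv_le_of_forall_mem_sphere_norm_le hr hdc hbound
    rw [hderiv.deriv] at this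
    calc ‖fderiv ℂ f q v - fderiv ℂ f p v‖ ≤ ε * r / 2 / r := this
      _ = ε / 2 := by field_simp
  have key2 : ∀ v : E, ‖(fderiv ℂ f q - fderiv ℂ f p) v‖ ≤ ε / 2 * ‖v‖ := by
    intro v
    rcases eq_or_ne v 0 with rfl | hv
    · simp
    · have hnv : 0 < ‖v‖ := norm_pos_iff.2 hv
      have hu : ‖(‖v‖⁻¹ • v : E)‖ ≤ 1 := by
        rw [norm_smul, norm_inv, norm_norm, inv_mul_cancel₀ hnv.ne']
      have hk := key _ hu
      have heq : fderiv ℂ f q (‖v‖⁻¹ • v) - fderiv ℂ f p (‖v‖⁻¹ • v)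
          = ‖v‖⁻¹ • (fderiv ℂ f q v - fderiv ℂ f p v) := by
        rw [(fderiv ℂ f q).map_smul_of_tower, (fderiv ℂ f p).map_smul_of_tower, smul_sub]
      rw [heq, norm_smul, norm_inv, norm_norm] at hk
      rw [ContinuousLinearMap.sub_apply]
      calc ‖fderiv ℂ f q v - fderiv ℂ f p v‖
          = ‖v‖ * (‖v‖⁻¹ * ‖fderiv ℂ f q v - fderiv ℂ f p v‖) := by
            field_simp
        _ ≤ ‖v‖ * (ε / 2) := by
            exact mul_le_mul_of_nonneg_left hk (norm_nonneg _)
        _ = ε / 2 * ‖v‖ := mul_comm _ _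
  have hfin : dist (fderiv ℂ f q) (fderiv ℂ f p) ≤ ε / 2 := by
    rw [dist_eq_norm]
    exact ContinuousLinearMap.opNorm_le_bound _ (by positivity) key2
  linarith

/-- Section 3 of the paper: existence, uniqueness and coefficient bounds for the
solution `f*` of the implicit equation `G(z, f*(z)) = 0` with `f*(0) = 0`, where `G` is
holomorphic on a neighborhood of `D̄_{ρ₁} × D̄_ρ^ν`, `G(0,0) = 0` and `∂G/∂f(0,0)` is
invertible.  The Taylor coefficients `a_{0,k}` of `f*` at `0` satisfy
`‖a_{0,k}‖ ≤ α A k⁻² κ^{-k}` with `A = 1/(2(1+π²/3))`. -/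
theorem stmt_12 (ν : ℕ) (ρ₁ ρ : ℝ) (hρ₁ : 0 < ρ₁) (hρ : 0 < ρ)
    (G : ℂ × EuclideanSpace ℂ (Fin ν) → EuclideanSpace ℂ (Fin ν))
    (hG : ∃ U : Set (ℂ × EuclideanSpace ℂ (Fin ν)), IsOpen U ∧
      (Metric.closedBall (0 : ℂ) ρ₁ ×ˢ
        {w : EuclideanSpace ℂ (Fin ν) | ∀ i, ‖w i‖ ≤ ρ}) ⊆ U ∧
      DifferentiableOn ℂ G U)
    (hG0 : G (0, 0) = 0)
    (hB : IsUnit (fderiv ℂ (fun w => G (0, w)) 0)) :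
    ∃ κ > 0, ∃ α > 0, ∃ fstar : ℂ → EuclideanSpace ℂ (Fin ν),
      (DifferentiableOn ℂ fstar (Metric.ball 0 κ) ∧ fstar 0 = 0 ∧
        ∀ z ∈ Metric.ball (0 : ℂ) κ, G (z, fstar z) = 0) ∧
      (∀ g : ℂ → EuclideanSpace ℂ (Fin ν),
        DifferentiableOn ℂ g (Metric.ball 0 κ) → g 0 = 0 →
        (∀ z ∈ Metric.ball (0 : ℂ) κ, G (z, g z) = 0) →
        Set.EqOn g fstar (Metric.ball 0 κ)) ∧
      ∀ k : ℕ, 1 ≤ k →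
        ‖((k.factorial : ℂ))⁻¹ • iteratedDeriv k fstar 0‖ ≤
          α * (1 / (2 * (1 + Real.pi ^ 2 / 3))) / (k : ℝ) ^ 2 / κ ^ k := by
  classical
  obtain ⟨U, hUo, hUsub, hGd⟩ := hG
  -- (0,0) ∈ U
  have h00U : ((0 : ℂ), (0 : (EuclideanSpace ℂ (Fin ν)))) ∈ U := by
    apply hUsub
    constructor
    · simpa using hρ₁.le
    · intro i; simp [hρ.le]
  obtain ⟨R, hR, hRU⟩ := Metric.nhds_basis_closedBall.mem_iff.1 (hUo.mem_nhds h00U)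
  set r : ℝ := R / 3 with hr_def
  have hr : 0 < r := by positivity
  have h3r : 3 * r = R := by rw [hr_def]; ring
  have hballU : ball ((0 : ℂ), (0 : (EuclideanSpace ℂ (Fin ν)))) r ⊆ U := by
    refine (ball_subset_closedBall.trans ?_).trans hRU
    exact closedBall_subset_closedBall (by rw [hr_def]; linarith)
  -- continuity of the derivative of G near the origin
  have hcont : ∀ p ∈ ball ((0 : ℂ), (0 : (EuclideanSpace ℂ (Fin ν)))) r, ContinuousAt (fderiv ℂ G) p := by
    intro p hp
    exact aux_fderiv_cont hUo hGd hr (by rw [h3r]; exact hRU) hp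
  have hGball : DifferentiableOn ℂ G (ball ((0 : ℂ), (0 : (EuclideanSpace ℂ (Fin ν)))) r) := hGd.mono hballU
  have hC1G : ContDiffOn ℂ 1 G (ball ((0 : ℂ), (0 : (EuclideanSpace ℂ (Fin ν)))) r) := by
    rw [show (1 : WithTop ℕ∞) = 0 + 1 by rw [zero_add],
      contDiffOn_succ_iff_fderiv_of_isOpen isOpen_ball]
    refine ⟨hGball, by simp, ?_⟩
    rw [contDiffOn_zero]
    exact fun p hp => (hcont p hp).continuousWithinAt
  set F : ℂ × (EuclideanSpace ℂ (Fin ν)) → ℂ × (EuclideanSpace ℂ (Fin ν)) := fun p => (p.1, G p) with hF_def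
  have h00ball : ((0 : ℂ), (0 : (EuclideanSpace ℂ (Fin ν)))) ∈ ball ((0 : ℂ), (0 : (EuclideanSpace ℂ (Fin ν)))) r := mem_ball_self hr
  have hC1F : ContDiffOn ℂ 1 F (ball ((0 : ℂ), (0 : (EuclideanSpace ℂ (Fin ν)))) r) :=
    (contDiff_fst.contDiffOn).prodMk hC1G
  have hC1Fat : ContDiffAt ℂ 1 F ((0 : ℂ), (0 : (EuclideanSpace ℂ (Fin ν)))) :=
    hC1F.contDiffAt (isOpen_ball.mem_nhds h00ball)
  set D : ℂ × (EuclideanSpace ℂ (Fin ν)) →L[ℂ] (EuclideanSpace ℂ (Fin ν)) := fderiv ℂ G ((0 : ℂ), (0 : (EuclideanSpace ℂ (Fin ν)))) with hD_def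
  have hGat : HasFDerivAt G D ((0 : ℂ), (0 : (EuclideanSpace ℂ (Fin ν)))) :=
    (hGd.differentiableAt (hUo.mem_nhds h00U)).hasFDerivAt
  set F' : ℂ × (EuclideanSpace ℂ (Fin ν)) →L[ℂ] ℂ × (EuclideanSpace ℂ (Fin ν)) := (ContinuousLinearMap.fst ℂ ℂ (EuclideanSpace ℂ (Fin ν))).prod D with hF'_def
  have hFat : HasFDerivAt F F' ((0 : ℂ), (0 : (EuclideanSpace ℂ (Fin ν)))) := hasFDerivAt_fst.prodMk hGat
  -- identify B with D ∘ inr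
  have hJ : HasFDerivAt (fun w : (EuclideanSpace ℂ (Fin ν)) => (((0 : ℂ), w) : ℂ × (EuclideanSpace ℂ (Fin ν))))
      (ContinuousLinearMap.inr ℂ ℂ (EuclideanSpace ℂ (Fin ν))) 0 := (ContinuousLinearMap.inr ℂ ℂ (EuclideanSpace ℂ (Fin ν))).hasFDerivAt
  have hcompB : HasFDerivAt (fun w : (EuclideanSpace ℂ (Fin ν)) => G (0, w))
      (D.comp (ContinuousLinearMap.inr ℂ ℂ (EuclideanSpace ℂ (Fin ν)))) 0 := hGat.comp (0 : (EuclideanSpace ℂ (Fin ν))) hJ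
  have hBu : IsUnit (D.comp (ContinuousLinearMap.inr ℂ ℂ (EuclideanSpace ℂ (Fin ν)))) := by
    rwa [hcompB.fderiv] at hB
  obtain ⟨u, hu⟩ := hBu
  set Bc : (EuclideanSpace ℂ (Fin ν)) →L[ℂ] (EuclideanSpace ℂ (Fin ν)) := D.comp (ContinuousLinearMap.inr ℂ ℂ (EuclideanSpace ℂ (Fin ν))) with hBc_def
  set D₁ : ℂ →L[ℂ] (EuclideanSpace ℂ (Fin ν)) := D.comp (ContinuousLinearMap.inl ℂ ℂ (EuclideanSpace ℂ (Fin ν))) with hD₁_def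
  have hDsplit : ∀ x : ℂ × (EuclideanSpace ℂ (Fin ν)), D x = D₁ x.1 + Bc x.2 := by
    intro x
    have hx : x = ((x.1, (0 : (EuclideanSpace ℂ (Fin ν)))) : ℂ × (EuclideanSpace ℂ (Fin ν))) + ((0 : ℂ), x.2) := by
      ext <;> simp
    calc D x = D (((x.1, (0 : (EuclideanSpace ℂ (Fin ν)))) : ℂ × (EuclideanSpace ℂ (Fin ν))) + ((0 : ℂ), x.2)) := by rw [← hx]
      _ = D (x.1, (0 : (EuclideanSpace ℂ (Fin ν)))) + D ((0 : ℂ), x.2) := map_add _ _ _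
      _ = D₁ x.1 + Bc x.2 := rfl
  set Finv : ℂ × (EuclideanSpace ℂ (Fin ν)) →L[ℂ] ℂ × (EuclideanSpace ℂ (Fin ν)) := (ContinuousLinearMap.fst ℂ ℂ (EuclideanSpace ℂ (Fin ν))).prod
    (((↑u⁻¹ : (EuclideanSpace ℂ (Fin ν)) →L[ℂ] (EuclideanSpace ℂ (Fin ν)))).comp
      ((ContinuousLinearMap.snd ℂ ℂ (EuclideanSpace ℂ (Fin ν))) - D₁.comp (ContinuousLinearMap.fst ℂ ℂ (EuclideanSpace ℂ (Fin ν)))))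
    with hFinv_def
  have huinv : ∀ w : (EuclideanSpace ℂ (Fin ν)), (↑u⁻¹ : (EuclideanSpace ℂ (Fin ν)) →L[ℂ] (EuclideanSpace ℂ (Fin ν))) (Bc w) = w := by
    intro w
    rw [← hu, ← ContinuousLinearMap.mul_apply, u.inv_mul, ContinuousLinearMap.one_apply]
  have huinv' : ∀ w : (EuclideanSpace ℂ (Fin ν)), Bc ((↑u⁻¹ : (EuclideanSpace ℂ (Fin ν)) →L[ℂ] (EuclideanSpace ℂ (Fin ν))) w) = w := by
    intro w
    rw [← hu, ← ContinuousLinearMap.mul_apply, u.mul_inv, ContinuousLinearMap.one_apply]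
  have hleft : Function.LeftInverse Finv F' := by
    intro x
    have h1 : F' x = (x.1, D x) := rfl
    have h2 : Finv (x.1, D x) = (x.1, (↑u⁻¹ : (EuclideanSpace ℂ (Fin ν)) →L[ℂ] (EuclideanSpace ℂ (Fin ν))) (D x - D₁ x.1)) := rfl
    rw [h1, h2]
    have : D x - D₁ x.1 = Bc x.2 := by rw [hDsplit x]; abel
    rw [this, huinv]
  have hright : Function.RightInverse Finv F' := by
    intro y
    have h1 : Finv y = (y.1, (↑u⁻¹ : (EuclideanSpace ℂ (Fin ν)) →L[ℂ] (EuclideanSpace ℂ (Fin ν))) (y.2 - D₁ y.1)) := rfl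
    have h2 : F' (Finv y) = (y.1, D (y.1, (↑u⁻¹ : (EuclideanSpace ℂ (Fin ν)) →L[ℂ] (EuclideanSpace ℂ (Fin ν))) (y.2 - D₁ y.1))) := rfl
    rw [h2, hDsplit]
    simp only []
    rw [huinv']
    have h3 : D₁ y.1 + (y.2 - D₁ y.1) = y.2 := by abel
    exact Prod.ext rfl h3
  set e₀ : (ℂ × (EuclideanSpace ℂ (Fin ν))) ≃L[ℂ] (ℂ × (EuclideanSpace ℂ (Fin ν))) := ContinuousLinearEquiv.equivOfInverse F' Finv hleft hright
    with he₀_def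
  have he₀coe : (e₀ : ℂ × (EuclideanSpace ℂ (Fin ν)) →L[ℂ] ℂ × (EuclideanSpace ℂ (Fin ν))) = F' := rfl
  have hfderivF00 : fderiv ℂ F ((0 : ℂ), (0 : (EuclideanSpace ℂ (Fin ν)))) = F' := hFat.fderiv
  have hstrict : HasStrictFDerivAt F (e₀ : ℂ × (EuclideanSpace ℂ (Fin ν)) →L[ℂ] ℂ × (EuclideanSpace ℂ (Fin ν))) ((0 : ℂ), (0 : (EuclideanSpace ℂ (Fin ν)))) := by
    have h1 := hC1Fat.hasStrictFDerivAt one_ne_zero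
    rwa [hfderivF00, ← he₀coe] at h1
  set Φ := hstrict.toOpenPartialHomeomorph F with hΦ_def
  have hΦcoe : ⇑Φ = F := hstrict.toOpenPartialHomeomorph_coe
  have hsrc : ((0 : ℂ), (0 : (EuclideanSpace ℂ (Fin ν)))) ∈ Φ.source := hstrict.mem_toOpenPartialHomeomorph_source
  have hF00 : F ((0 : ℂ), (0 : (EuclideanSpace ℂ (Fin ν)))) = ((0 : ℂ), (0 : (EuclideanSpace ℂ (Fin ν)))) := by
    simp only [hF_def]
    exact Prod.ext rfl hG0
  have htgt : ((0 : ℂ), (0 : (EuclideanSpace ℂ (Fin ν)))) ∈ Φ.target := by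
    have := Φ.map_source hsrc
    rwa [hΦcoe, hF00] at this
  have hsymm00 : Φ.symm ((0 : ℂ), (0 : (EuclideanSpace ℂ (Fin ν)))) = ((0 : ℂ), (0 : (EuclideanSpace ℂ (Fin ν)))) := by
    have := Φ.left_inv hsrc
    rw [hΦcoe, hF00] at this
    exact this
  have hFdiffAt : ∀ x ∈ ball ((0 : ℂ), (0 : (EuclideanSpace ℂ (Fin ν)))) r, DifferentiableAt ℂ F x := fun x hx =>
    differentiableAt_fst.prodMk (hGd.differentiableAt (hUo.mem_nhds (hballU hx)))
  have hcontF : ContinuousOn (fderiv ℂ F) (ball ((0 : ℂ), (0 : (EuclideanSpace ℂ (Fin ν)))) r) := by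
    have h1 := (contDiffOn_succ_iff_fderiv_of_isOpen (n := 0) isOpen_ball).1 (by
      rw [zero_add]; exact hC1F)
    rw [contDiffOn_zero] at h1
    exact h1.2.2
  set W : Set (ℂ × (EuclideanSpace ℂ (Fin ν))) := ball ((0 : ℂ), (0 : (EuclideanSpace ℂ (Fin ν)))) r ∩
    (fderiv ℂ F) ⁻¹' {L : ℂ × (EuclideanSpace ℂ (Fin ν)) →L[ℂ] ℂ × (EuclideanSpace ℂ (Fin ν)) | IsUnit L} with hW_def
  have hWo : IsOpen W := hcontF.isOpen_inter_preimage isOpen_ball Units.isOpen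
  have h00W : ((0 : ℂ), (0 : (EuclideanSpace ℂ (Fin ν)))) ∈ W := by
    refine ⟨h00ball, ?_⟩
    show IsUnit (fderiv ℂ F ((0 : ℂ), (0 : (EuclideanSpace ℂ (Fin ν)))))
    rw [hfderivF00, ← he₀coe]
    exact ⟨e₀.toUnit, rfl⟩
  set T : Set (ℂ × (EuclideanSpace ℂ (Fin ν))) := Φ.target ∩ Φ.symm ⁻¹' (W ∩ Φ.source) with hT_def
  have hTo : IsOpen T := Φ.isOpen_inter_preimage_symm (hWo.inter Φ.open_source)
  have h00T : ((0 : ℂ), (0 : (EuclideanSpace ℂ (Fin ν)))) ∈ T := by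
    refine ⟨htgt, ?_⟩
    show Φ.symm ((0 : ℂ), (0 : (EuclideanSpace ℂ (Fin ν)))) ∈ W ∩ Φ.source
    rw [hsymm00]
    exact ⟨h00W, hsrc⟩
  obtain ⟨κ₀, hκ₀, hκ₀T⟩ := Metric.isOpen_iff.1 hTo _ h00T
  have hzT : ∀ z : ℂ, z ∈ ball (0 : ℂ) κ₀ → ((z, (0 : (EuclideanSpace ℂ (Fin ν)))) : ℂ × (EuclideanSpace ℂ (Fin ν))) ∈ T := by
    intro z hz
    apply hκ₀T
    rw [mem_ball] at hz ⊢
    rw [Prod.dist_eq]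
    simpa using hz
  set fstar : ℂ → (EuclideanSpace ℂ (Fin ν)) := fun z => (Φ.symm (z, (0 : (EuclideanSpace ℂ (Fin ν))))).2 with hfstar_def
  have hmain : ∀ z ∈ ball (0 : ℂ) κ₀, ((z, fstar z) : ℂ × (EuclideanSpace ℂ (Fin ν))) ∈ W ∩ Φ.source ∧
      G (z, fstar z) = 0 := by
    intro z hz
    obtain ⟨hzt, hzw⟩ := hzT z hz
    have hFpz : F (Φ.symm (z, (0 : (EuclideanSpace ℂ (Fin ν))))) = ((z, (0 : (EuclideanSpace ℂ (Fin ν)))) : ℂ × (EuclideanSpace ℂ (Fin ν))) := by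
      have := Φ.right_inv hzt
      rwa [hΦcoe] at this
    have hpz1 : (Φ.symm (z, (0 : (EuclideanSpace ℂ (Fin ν))))).1 = z := congrArg Prod.fst hFpz
    have hGpz : G (Φ.symm (z, (0 : (EuclideanSpace ℂ (Fin ν))))) = 0 := congrArg Prod.snd hFpz
    have hpz_eq : Φ.symm (z, (0 : (EuclideanSpace ℂ (Fin ν)))) = ((z, fstar z) : ℂ × (EuclideanSpace ℂ (Fin ν))) := by
      ext
      · exact hpz1
      · rfl
    rw [Set.mem_preimage, hpz_eq] at hzw
    refine ⟨hzw, ?_⟩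
    rw [← hpz_eq]
    exact hGpz
  have hFeq : ∀ z ∈ ball (0 : ℂ) κ₀, F ((z, fstar z) : ℂ × (EuclideanSpace ℂ (Fin ν))) = ((z, (0 : (EuclideanSpace ℂ (Fin ν)))) : ℂ × (EuclideanSpace ℂ (Fin ν))) := by
    intro z hz
    have := (hmain z hz).2
    simp only [hF_def]
    exact Prod.ext rfl this
  have hdiff_at : ∀ z ∈ ball (0 : ℂ) κ₀, DifferentiableAt ℂ fstar z := by
    intro z hz
    obtain ⟨hzt, hzw⟩ := hzT z hz
    have hWmem : Φ.symm (z, (0 : (EuclideanSpace ℂ (Fin ν)))) ∈ W := hzw.1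
    obtain ⟨u', hu'⟩ := hWmem.2
    set e : (ℂ × (EuclideanSpace ℂ (Fin ν))) ≃L[ℂ] (ℂ × (EuclideanSpace ℂ (Fin ν))) := ContinuousLinearEquiv.ofUnit u' with he_def
    have hecoe : (e : ℂ × (EuclideanSpace ℂ (Fin ν)) →L[ℂ] ℂ × (EuclideanSpace ℂ (Fin ν))) = fderiv ℂ F (Φ.symm (z, (0 : (EuclideanSpace ℂ (Fin ν))))) := hu'
    have hFd : HasFDerivAt F (e : ℂ × (EuclideanSpace ℂ (Fin ν)) →L[ℂ] ℂ × (EuclideanSpace ℂ (Fin ν))) (Φ.symm (z, (0 : (EuclideanSpace ℂ (Fin ν))))) := by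
      rw [hecoe]
      exact (hFdiffAt _ hWmem.1).hasFDerivAt
    have hev : ∀ᶠ y in nhds ((z, (0 : (EuclideanSpace ℂ (Fin ν)))) : ℂ × (EuclideanSpace ℂ (Fin ν))), F (Φ.symm y) = y := by
      have h1 := Φ.eventually_right_inverse hzt
      rw [hΦcoe] at h1
      exact h1
    have hsy : HasFDerivAt Φ.symm ((e.symm : ℂ × (EuclideanSpace ℂ (Fin ν)) →L[ℂ] ℂ × (EuclideanSpace ℂ (Fin ν)))) ((z, (0 : (EuclideanSpace ℂ (Fin ν)))) : ℂ × (EuclideanSpace ℂ (Fin ν))) :=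
      HasFDerivAt.of_local_left_inverse (Φ.continuousAt_symm hzt) hFd hev
    have h1 : DifferentiableAt ℂ (fun w : ℂ => ((w, (0 : (EuclideanSpace ℂ (Fin ν)))) : ℂ × (EuclideanSpace ℂ (Fin ν)))) z :=
      differentiableAt_id.prodMk (differentiableAt_const _)
    exact differentiableAt_snd.comp z ((hsy.differentiableAt).comp z h1)
  have hfstar0 : fstar 0 = 0 := by
    simp only [hfstar_def]
    rw [hsymm00]
  -- choose κ and the power series
  set κ : ℝ := κ₀ / 2 with hκ_def
  have hκ : 0 < κ := by positivity
  have hκκ₀ : ∀ z : ℂ, z ∈ ball (0 : ℂ) κ → z ∈ ball (0 : ℂ) κ₀ := fun z hz =>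
    ball_subset_ball (by rw [hκ_def]; linarith) hz
  set R₂ : NNReal := ⟨3 * κ₀ / 4, by positivity⟩ with hR₂_def
  have hR₂pos : 0 < R₂ := by
    rw [← NNReal.coe_lt_coe]
    show (0 : ℝ) < 3 * κ₀ / 4
    positivity
  have hdOn : DifferentiableOn ℂ fstar (closedBall (0 : ℂ) R₂) := by
    intro z hz
    refine (hdiff_at z ?_).differentiableWithinAt
    rw [mem_closedBall] at hz
    rw [mem_ball]
    have : (R₂ : ℝ) = 3 * κ₀ / 4 := rfl
    rw [this] at hz
    linarith
  have hp := hdOn.hasFPowerSeriesOnBall hR₂pos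
  set p := cauchyPowerSeries fstar 0 R₂ with hp_def
  set κn : NNReal := ⟨κ, hκ.le⟩ with hκn_def
  have hκn_lt : (κn : ENNReal) < p.radius := by
    refine lt_of_lt_of_le ?_ hp.r_le
    rw [ENNReal.coe_lt_coe, ← NNReal.coe_lt_coe]
    show κ < 3 * κ₀ / 4
    rw [hκ_def]; linarith
  obtain ⟨a, ha, C, hC, hbound⟩ := p.norm_mul_pow_le_mul_pow_of_lt_radius hκn_lt
  -- boundedness of C * n^2 * a^n
  have hsum : Summable (fun n : ℕ => (n : ℝ) ^ 2 * a ^ n) := by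
    apply summable_pow_mul_geometric_of_norm_lt_one
    rw [Real.norm_eq_abs, abs_of_pos ha.1]
    exact ha.2
  have htend : Filter.Tendsto (fun n : ℕ => C * ((n : ℝ) ^ 2 * a ^ n)) Filter.atTop (nhds 0) := by
    have := hsum.tendsto_atTop_zero
    simpa using this.const_mul C
  obtain ⟨M, hM⟩ := htend.bddAbove_range
  have hMbound : ∀ n : ℕ, C * ((n : ℝ) ^ 2 * a ^ n) ≤ M := fun n =>
    hM (Set.mem_range_self n)
  set A : ℝ := 1 / (2 * (1 + Real.pi ^ 2 / 3)) with hA_def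
  have hA : 0 < A := by positivity
  set α : ℝ := (max M 0 + 1) / A with hα_def
  have hα : 0 < α := by positivity
  have hαA : α * A = max M 0 + 1 := div_mul_cancel₀ _ hA.ne'
  refine ⟨κ, hκ, α, hα, fstar, ⟨?_, hfstar0, ?_⟩, ?_, ?_⟩
  · exact fun z hz => (hdiff_at z (hκκ₀ z hz)).differentiableWithinAt
  · exact fun z hz => (hmain z (hκκ₀ z hz)).2
  · -- uniqueness
    intro g hgdiff hg0 hgzero
    have hfdOn : DifferentiableOn ℂ fstar (ball (0 : ℂ) κ) :=
      fun z hz => (hdiff_at z (hκκ₀ z hz)).differentiableWithinAt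
    have hfan : AnalyticOnNhd ℂ fstar (ball (0 : ℂ) κ) :=
      hfdOn.analyticOnNhd isOpen_ball
    have hgan : AnalyticOnNhd ℂ g (ball (0 : ℂ) κ) := hgdiff.analyticOnNhd isOpen_ball
    have hev : g =ᶠ[nhds (0 : ℂ)] fstar := by
      have hc : ContinuousAt g 0 :=
        hgdiff.continuousOn.continuousAt (isOpen_ball.mem_nhds (mem_ball_self hκ))
      have hcc : ContinuousAt (fun z : ℂ => ((z, g z) : ℂ × (EuclideanSpace ℂ (Fin ν)))) 0 :=
        continuousAt_id.prodMk hc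
      have hval : ((0 : ℂ), g 0) ∈ Φ.source := by rw [hg0]; exact hsrc
      have h1 : ∀ᶠ z in nhds (0 : ℂ), ((z, g z) : ℂ × (EuclideanSpace ℂ (Fin ν))) ∈ Φ.source :=
        hcc.eventually_mem (Φ.open_source.mem_nhds hval)
      have h2 : ∀ᶠ z in nhds (0 : ℂ), z ∈ ball (0 : ℂ) κ :=
        isOpen_ball.eventually_mem (mem_ball_self hκ)
      filter_upwards [h1, h2] with z hz1 hz2
      have e1 : F ((z, g z) : ℂ × (EuclideanSpace ℂ (Fin ν))) = ((z, (0 : (EuclideanSpace ℂ (Fin ν)))) : ℂ × (EuclideanSpace ℂ (Fin ν))) := by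
        simp only [hF_def]
        exact Prod.ext rfl (hgzero z hz2)
      have e2 : F ((z, fstar z) : ℂ × (EuclideanSpace ℂ (Fin ν))) = ((z, (0 : (EuclideanSpace ℂ (Fin ν)))) : ℂ × (EuclideanSpace ℂ (Fin ν))) :=
        hFeq z (hκκ₀ z hz2)
      have hz1' : ((z, fstar z) : ℂ × (EuclideanSpace ℂ (Fin ν))) ∈ Φ.source := (hmain z (hκκ₀ z hz2)).1.2
      have := Φ.injOn hz1 hz1' (by rw [hΦcoe, e1, e2])
      exact congrArg Prod.snd this
    exact hgan.eqOn_of_preconnected_of_eventuallyEq hfan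
      (convex_ball (0 : ℂ) κ).isPreconnected (mem_ball_self hκ) hev
  · -- coefficient bounds
    intro k hk
    have hcoeff : iteratedDeriv k fstar 0 = k.factorial • p.coeff k := by
      have h1 := hp.factorial_smul (1 : ℂ) k
      rw [iteratedDeriv_eq_iteratedFDeriv]
      rw [← h1]
      rfl
    have hnorm : ‖((k.factorial : ℂ))⁻¹ • iteratedDeriv k fstar 0‖ = ‖p.coeff k‖ := by
      rw [hcoeff, ← Nat.cast_smul_eq_nsmul ℂ, smul_smul,
        inv_mul_cancel₀ (by exact_mod_cast k.factorial_ne_zero), one_smul]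
    rw [hnorm]
    have hknorm : ‖p.coeff k‖ = ‖p k‖ := (FormalMultilinearSeries.norm_apply_eq_norm_coef (p := p) (n := k)).symm
    have hb := hbound k
    have hκnk : (κn : ℝ) = κ := rfl
    rw [hκnk] at hb
    have hkpos : (0 : ℝ) < (k : ℝ) ^ 2 := by
      have : (1 : ℝ) ≤ (k : ℝ) := by exact_mod_cast hk
      positivity
    have hκkpos : (0 : ℝ) < κ ^ k := by positivity
    rw [div_div, le_div_iff₀ (by positivity)]
    calc ‖p.coeff k‖ * ((k : ℝ) ^ 2 * κ ^ k)
        = (k : ℝ) ^ 2 * (‖p k‖ * κ ^ k) := by rw [hknorm]; ring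
      _ ≤ (k : ℝ) ^ 2 * (C * a ^ k) := by
          exact mul_le_mul_of_nonneg_left hb hkpos.le
      _ = C * ((k : ℝ) ^ 2 * a ^ k) := by ring
      _ ≤ M := hMbound k
      _ ≤ max M 0 := le_max_left _ _
      _ ≤ max M 0 + 1 := by linarith
      _ = α * A := hαA.symm
      _ = α * (1 / (2 * (1 + Real.pi ^ 2 / 3))) := rfl
end

section
/- Let κ > 0 and for a holomorphic function h on D_κ = {z ∈ ℂ : |z| < κ} define the Nagumo norm ‖h‖_j = sup_{|z|<κ} (κ − |z|)^j |h(z)| for integers j ≥ 0. Then for every holomorphic f : D_κ → ℂ and every integer k ≥ 0, the derivative satisfies ‖f′‖_{k+1} ≤ e·(k+1)·‖f‖_k, where e is Euler's number. -/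
open Metric

/-- The Nagumo norm of order `j` on the disc `D_κ`:
`‖h‖_j = sup_{|z|<κ} (κ − |z|)^j |h(z)|` (with value in `[0,∞]`). -/
noncomputable def nagumoNorm (κ : ℝ) (j : ℕ) (h : ℂ → ℂ) : ENNReal :=
  ⨆ z ∈ Metric.ball (0 : ℂ) κ, ENNReal.ofReal ((κ - ‖z‖) ^ j * ‖h z‖)

lemma key_ineq (k : ℕ) : ((k : ℝ) + 2) ^ (k + 1) ≤ Real.exp 1 * ((k : ℝ) + 1) ^ (k + 1) := by
  set K : ℝ := (k : ℝ) + 1 with hK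
  have hKpos : 0 < K := by positivity
  have h1 : K + 1 ≤ K * Real.exp (1 / K) := by
    have := Real.add_one_le_exp (1 / K)
    calc K + 1 = K * (1 / K + 1) := by field_simp; ring
    _ ≤ K * Real.exp (1 / K) := by nlinarith
  have h2 : (K + 1) ^ (k + 1) ≤ (K * Real.exp (1 / K)) ^ (k + 1) :=
    pow_le_pow_left₀ (by positivity) h1 _
  have h3 : (K * Real.exp (1 / K)) ^ (k + 1) = K ^ (k + 1) * Real.exp 1 := by
    rw [mul_pow, ← Real.exp_nat_mul]
    congr 1
    field_simp [hK]
    congr 1; rw [hK]; push_cast; exact div_self (ne_of_gt (by positivity))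
  have : ((k : ℝ) + 2) = K + 1 := by ring
  rw [this]
  calc (K + 1) ^ (k + 1) ≤ K ^ (k + 1) * Real.exp 1 := h2.trans_eq h3
  _ = Real.exp 1 * K ^ (k + 1) := by ring

/-- Derivative property of Nagumo norms: `‖f′‖_{k+1} ≤ e (k+1) ‖f‖_k` for a holomorphic
function `f` on the disc `D_κ`, where `e` is Euler's number. -/
theorem stmt_14 (κ : ℝ) (hκ : 0 < κ) (f : ℂ → ℂ)
    (hf : DifferentiableOn ℂ f (Metric.ball 0 κ)) (k : ℕ) :
    nagumoNorm κ (k + 1) (deriv f) ≤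
      ENNReal.ofReal (Real.exp 1 * (k + 1)) * nagumoNorm κ k f := by
  set N := nagumoNorm κ k f with hN
  have hepos : 0 < Real.exp 1 * ((k : ℝ) + 1) := by positivity
  rcases eq_top_or_lt_top N with hNtop | hNlt
  · rw [hNtop, ENNReal.mul_top (by simp [ENNReal.ofReal_eq_zero, not_le, hepos])]
    exact le_top
  set M := N.toReal with hM
  have hM0 : 0 ≤ M := ENNReal.toReal_nonneg
  have hNM : N = ENNReal.ofReal M := by rw [hM, ENNReal.ofReal_toReal hNlt.ne]
  -- every point bound
  have hbound : ∀ w ∈ ball (0 : ℂ) κ, (κ - ‖w‖) ^ k * ‖f w‖ ≤ M := by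
    intro w hw
    have h1 : ENNReal.ofReal ((κ - ‖w‖) ^ k * ‖f w‖) ≤ N := by
      rw [hN, nagumoNorm]
      exact le_iSup₂ (f := fun z (_ : z ∈ ball (0:ℂ) κ) =>
        ENNReal.ofReal ((κ - ‖z‖) ^ k * ‖f z‖)) w hw
    rw [hNM] at h1
    exact (ENNReal.ofReal_le_ofReal_iff hM0).mp h1
  rw [nagumoNorm]
  apply iSup₂_le
  intro z hz
  rw [hNM, ← ENNReal.ofReal_mul hepos.le]
  apply ENNReal.ofReal_le_ofReal
  -- real estimate
  have hzlt : ‖z‖ < κ := by simpa [Complex.dist_eq] using mem_ball.mp hz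
  set d : ℝ := κ - ‖z‖ with hdd
  have hd : 0 < d := by simp [hdd]; linarith
  set r : ℝ := d / ((k : ℝ) + 2) with hr
  have hrpos : 0 < r := by positivity
  have hrd : r < d := by
    rw [hr]
    rw [div_lt_iff₀ (by positivity)]
    nlinarith [hd]
  have hdr : d - r = d * ((k : ℝ) + 1) / ((k : ℝ) + 2) := by
    rw [hr]; field_simp; ring
  have hdrpos : 0 < d - r := by linarith
  have hsub : closedBall z r ⊆ ball (0 : ℂ) κ := by
    intro w hw
    have h1 : ‖w - z‖ ≤ r := by
      simpa [Complex.dist_eq] using mem_closedBall.mp hw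
    have h2 : ‖w‖ ≤ ‖z‖ + r := by
      calc ‖w‖ = ‖z + (w - z)‖ := by ring_nf
      _ ≤ ‖z‖ + ‖w - z‖ := norm_add_le _ _
      _ ≤ ‖z‖ + r := by linarith
    have : ‖w‖ < κ := by simp [hdd] at hd ⊢; linarith
    simpa [Complex.dist_eq] using this
  have hdc : DiffContOnCl ℂ f (ball z r) := by
    refine ⟨hf.mono (ball_subset_closedBall.trans hsub), (hf.continuousOn).mono ?_⟩
    exact (closure_ball_subset_closedBall).trans hsub
  set C : ℝ := M / (d - r) ^ k with hC
  have hsphere : ∀ w ∈ sphere z r, ‖f w‖ ≤ C := by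
    intro w hw
    have hw' : w ∈ ball (0 : ℂ) κ := hsub (sphere_subset_closedBall hw)
    have h1 : ‖w - z‖ = r := by
      simpa [Complex.dist_eq] using mem_sphere.mp hw
    have h2 : ‖w‖ ≤ ‖z‖ + r := by
      calc ‖w‖ = ‖z + (w - z)‖ := by ring_nf
      _ ≤ ‖z‖ + ‖w - z‖ := norm_add_le _ _
      _ = ‖z‖ + r := by rw [h1]
    have h3 : d - r ≤ κ - ‖w‖ := by simp [hdd] at *; linarith
    have h4 : (d - r) ^ k * ‖f w‖ ≤ (κ - ‖w‖) ^ k * ‖f w‖ :=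
      mul_le_mul_of_nonneg_right (pow_le_pow_left₀ hdrpos.le h3 k) (norm_nonneg _)
    have h5 : (d - r) ^ k * ‖f w‖ ≤ M := h4.trans (hbound w hw')
    rw [hC, le_div_iff₀ (by positivity)]
    linarith [h5]
  have hcauchy : ‖deriv f z‖ ≤ C / r :=
    Complex.norm_deriv_le_of_forall_mem_sphere_norm_le hrpos hdc hsphere
  -- combine
  have hCr : d ^ (k+1) * (C / r) = M * (((k : ℝ) + 2) ^ (k + 1) / ((k : ℝ) + 1) ^ k) := by
    rw [hC, hdr, hr, div_div, div_pow, mul_pow]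
    field_simp
    ring
  calc d ^ (k + 1) * ‖deriv f z‖
      ≤ d ^ (k + 1) * (C / r) := by
        have := hcauchy
        exact mul_le_mul_of_nonneg_left this (by positivity)
    _ = M * (((k : ℝ) + 2) ^ (k + 1) / ((k : ℝ) + 1) ^ k) := hCr
    _ ≤ M * (Real.exp 1 * ((k : ℝ) + 1)) := by
        apply mul_le_mul_of_nonneg_left _ hM0
        rw [div_le_iff₀ (by positivity)]
        calc ((k : ℝ) + 2) ^ (k + 1) ≤ Real.exp 1 * ((k : ℝ) + 1) ^ (k + 1) := key_ineq k
        _ = Real.exp 1 * ((k : ℝ) + 1) * ((k : ℝ) + 1) ^ k := by ring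
    _ = Real.exp 1 * ((k : ℝ) + 1) * M := by ring
end

section
/- Let γ ∈ (0, 2π), E > 0 and let S = S(0,γ;E) be the open sector {ε ∈ ℂ : 0 < |ε| < E, |arg ε| < γ/2}. Let g : S → ℂ^ν be holomorphic and suppose there exist constants C, μ > 0 such that ‖g^{(i)}(ε)‖ ≤ C · (i!)² · μ^i for every integer i ≥ 0 and every ε ∈ S. Then for each i ≥ 0 the limit g_i := lim_{S ∋ ε → 0} g^{(i)}(ε)/i! exists in ℂ^ν, and for every integer I ≥ 0 and every ε ∈ S, ‖g(ε) − Σ_{i=0}^{I−1} g_i ε^i‖ ≤ C · I! · μ^I · |ε|^I. -/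
open Metric Filter

/-- The open sector `S(0,γ;E) = {ε ∈ ℂ : 0 < |ε| < E, |arg ε| < γ/2}`. -/
def sector (γ E : ℝ) : Set ℂ :=
  {ε : ℂ | 0 < ‖ε‖ ∧ ‖ε‖ < E ∧ |Complex.arg ε| < γ / 2}

section AuxLemmas
open Set


lemma mem_sector_iff {γ E : ℝ} (hγ : 0 < γ) (hγπ : γ / 2 < Real.pi) {z : ℂ} :
    z ∈ sector γ E ↔ z ≠ 0 ∧ ‖z‖ < E ∧
      ‖z‖ * Real.cos (γ / 2) < z.re := by
  constructor
  · rintro ⟨h0, hE, ha⟩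
    have hz : z ≠ 0 := by
      intro h; rw [h] at h0; simp at h0
    refine ⟨hz, hE, ?_⟩
    have hcos : Real.cos (γ / 2) < Real.cos (|Complex.arg z|) :=
      Real.cos_lt_cos_of_nonneg_of_le_pi (abs_nonneg _) hγπ.le ha
    have : Real.cos (Complex.arg z) = z.re / ‖z‖ := Complex.cos_arg hz
    rw [Real.cos_abs, this] at hcos
    calc ‖z‖ * Real.cos (γ / 2)
        < ‖z‖ * (z.re / ‖z‖) := by
          exact mul_lt_mul_of_pos_left hcos h0
      _ = z.re := by field_simp
  · rintro ⟨hz, hE, hre⟩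
    have h0 : 0 < ‖z‖ := by simpa [norm_pos_iff] using hz
    refine ⟨h0, hE, ?_⟩
    by_contra h
    push_neg at h
    have hcos : Real.cos (|Complex.arg z|) ≤ Real.cos (γ / 2) :=
      Real.cos_le_cos_of_nonneg_of_le_pi (by positivity) (Complex.abs_arg_le_pi z) h
    rw [Real.cos_abs, Complex.cos_arg hz] at hcos
    have : z.re ≤ ‖z‖ * Real.cos (γ / 2) := by
      calc z.re = ‖z‖ * (z.re / ‖z‖) := by field_simp
        _ ≤ ‖z‖ * Real.cos (γ / 2) := by
            exact mul_le_mul_of_nonneg_left hcos h0.le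
    linarith

lemma sector_isOpen {γ E : ℝ} (hγπ : γ / 2 < Real.pi) : IsOpen (sector γ E) := by
  rw [isOpen_iff_mem_nhds]
  rintro z ⟨h0, hE, ha⟩
  have hz : z ≠ 0 := by intro h; rw [h] at h0; simp at h0
  have hslit : z ∈ Complex.slitPlane := by
    rw [Complex.mem_slitPlane_iff]
    by_contra h
    push_neg at h
    rcases lt_or_eq_of_le h.1 with h1 | h1
    · have : Complex.arg z = Real.pi := Complex.arg_eq_pi_iff.2 ⟨h1, h.2⟩
      rw [this, abs_of_nonneg Real.pi_pos.le] at ha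
      linarith
    · exact hz (Complex.ext (by simpa using h1) (by simpa using h.2))
  have e1 : {w : ℂ | 0 < ‖w‖} ∈ nhds z :=
    (isOpen_lt continuous_const continuous_norm).mem_nhds h0
  have e2 : {w : ℂ | ‖w‖ < E} ∈ nhds z :=
    (isOpen_lt continuous_norm continuous_const).mem_nhds hE
  have e3 : {w : ℂ | |Complex.arg w| < γ / 2} ∈ nhds z := by
    have hc : ContinuousAt (fun w : ℂ => |Complex.arg w|) z :=
      (Complex.continuousAt_arg hslit).abs
    exact hc.preimage_mem_nhds (Iio_mem_nhds ha)
  filter_upwards [e1, e2, e3] with w h1 h2 h3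
  exact ⟨h1, h2, h3⟩

lemma real_mem_sector {γ E : ℝ} (hγ : 0 < γ) {r : ℝ} (h0 : 0 < r) (hE : r < E) :
    (r : ℂ) ∈ sector γ E := by
  refine ⟨by simpa [Complex.norm_real, abs_of_pos h0] using h0, ?_, ?_⟩
  · simpa [Complex.norm_real, abs_of_pos h0] using hE
  · rw [Complex.arg_ofReal_of_nonneg h0.le]
    simpa using by positivity

lemma segment_abs_sub_sector {γ E : ℝ} (hγ : 0 < γ) (hγπ : γ / 2 < Real.pi) {ε : ℂ}
    (hε : ε ∈ sector γ E) :
    segment ℝ ε ((‖ε‖ : ℝ) : ℂ) ⊆ sector γ E := by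
  set c := Real.cos (γ / 2) with hc
  have hc1 : c < 1 := by
    rw [hc, ← Real.cos_zero]
    exact Real.cos_lt_cos_of_nonneg_of_le_pi le_rfl hγπ.le (by linarith)
  have hcm1 : -1 < c := by
    rw [hc, ← Real.cos_pi]
    exact Real.cos_lt_cos_of_nonneg_of_le_pi (by linarith) le_rfl hγπ
  rw [mem_sector_iff hγ hγπ] at hε
  obtain ⟨hz, hE, hre⟩ := hε
  set r := ‖ε‖ with hr
  have hr0 : 0 < r := by simpa [hr, norm_pos_iff] using hz
  rintro z ⟨a, b, ha, hb, hab, rfl⟩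
  rw [mem_sector_iff hγ hγπ]
  have habs : ‖a • ε + b • ((r : ℝ) : ℂ)‖ ≤ r := by
    calc ‖a • ε + b • ((r : ℝ) : ℂ)‖
        ≤ ‖a • ε‖ + ‖b • ((r : ℝ) : ℂ)‖ := norm_add_le _ _
      _ = a * r + b * r := by
          simp [Complex.norm_real, abs_of_pos hr0, abs_of_nonneg ha, abs_of_nonneg hb, hr]
      _ = r := by rw [← add_mul, hab, one_mul]
  have hsub : ∀ u v : ℂ, ‖u‖ - ‖v‖ ≤ ‖u + v‖ := by
    intro u v
    have := norm_sub_norm_le u (-v)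
    simpa [sub_neg_eq_add] using this
  have habs2 : a * r - b * r ≤ ‖a • ε + b • ((r : ℝ) : ℂ)‖ := by
    calc a * r - b * r
        ≤ ‖a • ε‖ - ‖b • ((r : ℝ) : ℂ)‖ := by
          simp [Complex.norm_real, abs_of_pos hr0, abs_of_nonneg ha, abs_of_nonneg hb, hr]
      _ ≤ _ := hsub _ _
  have habs3 : b * r - a * r ≤ ‖a • ε + b • ((r : ℝ) : ℂ)‖ := by
    calc b * r - a * r
        ≤ ‖b • ((r : ℝ) : ℂ)‖ - ‖a • ε‖ := by
          simp [Complex.norm_real, abs_of_pos hr0, abs_of_nonneg ha, abs_of_nonneg hb, hr]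
      _ ≤ ‖b • ((r : ℝ) : ℂ) + a • ε‖ := hsub _ _
      _ = _ := by rw [add_comm]
  have hre' : (a • ε + b • ((r : ℝ) : ℂ)).re = a * ε.re + b * r := by
    simp [Complex.add_re, Complex.smul_re]
  have hkey : ‖a • ε + b • ((r : ℝ) : ℂ)‖ * c < a * ε.re + b * r := by
    set A := ‖a • ε + b • ((r : ℝ) : ℂ)‖ with hA
    have hA0 : 0 ≤ A := norm_nonneg _
    have hxr : ε.re ≤ r := by simpa [hr] using Complex.re_le_norm ε
    rcases le_or_gt 0 c with hcpos | hcneg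
    · rcases eq_or_lt_of_le ha with rfl | hapos
      · -- a = 0, b = 1
        have hb1 : b = 1 := by linarith
        nlinarith
      · nlinarith [mul_le_mul_of_nonneg_left habs hcpos, mul_lt_mul_of_pos_left hre hapos]
    · rcases le_total a b with hab2 | hab2
      · nlinarith [mul_le_mul_of_nonpos_left habs3 hcneg.le, mul_lt_mul_of_pos_left hre (show (0:ℝ) < 1 by norm_num)]
      · nlinarith [mul_le_mul_of_nonpos_left habs2 hcneg.le]
  refine ⟨?_, lt_of_le_of_lt habs hE, by rwa [hre']⟩
  intro h0
  rw [h0] at hkey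
  simp [hre'] at hkey
  rw [h0] at hre'
  simp at hre'
  nlinarith [hkey]

open scoped Nat in
lemma taylor_bound_sharp {F : Type*} [NormedAddCommGroup F] [NormedSpace ℝ F]
    {f : ℝ → F} {a b K : ℝ} {n : ℕ} (hab : a < b)
    (hf : ContDiffOn ℝ (n + 1) f (Set.Icc a b))
    (hK : ∀ y ∈ Set.Icc a b, ‖iteratedDerivWithin (n + 1) f (Set.Icc a b) y‖ ≤ K) :
    ‖f b - taylorWithinEval f n (Set.Icc a b) a b‖ ≤ K * (b - a) ^ (n + 1) / (n + 1)! := by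
  have hK0 : 0 ≤ K := le_trans (norm_nonneg _) (hK a ⟨le_rfl, hab.le⟩)
  have hf' : DifferentiableOn ℝ (iteratedDerivWithin n f (Set.Icc a b)) (Set.Icc a b) :=
    hf.differentiableOn_iteratedDerivWithin (mod_cast n.lt_succ_self) (uniqueDiffOn_Icc hab)
  set F' := fun y : ℝ => taylorWithinEval f n (Set.Icc a b) y b with hF
  have hFd : ∀ t ∈ Set.Icc a b, HasDerivWithinAt F'
      (((n ! : ℝ)⁻¹ * (b - t) ^ n) • iteratedDerivWithin (n + 1) f (Set.Icc a b) t)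
      (Set.Icc a b) t := fun t ht =>
    hasDerivWithinAt_taylorWithinEval_at_Icc b hab ht hf.of_succ hf'
  set c : ℝ := K / (n + 1)! with hcdef
  have hc0 : 0 ≤ c := by positivity
  set B : ℝ → ℝ := fun y => c * ((b - a) ^ (n + 1) - (b - y) ^ (n + 1)) with hBdef
  have hB : ∀ y : ℝ, HasDerivAt B (c * ((n + 1) * (b - y) ^ n)) y := by
    intro y
    have h1 : HasDerivAt (fun y : ℝ => (b - y) ^ (n + 1)) (-(n + 1) * (b - y) ^ n) y :=
      monomial_has_deriv_aux y b n
    have h2 := ((h1.const_mul c).const_sub (c * (b - a) ^ (n + 1)))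
    have heq : c * ((n + 1 : ℝ) * (b - y) ^ n) = -(c * (-(n + 1 : ℝ) * (b - y) ^ n)) := by ring
    rw [hBdef]
    simp only [mul_sub]
    rw [heq]
    exact h2
  have key := image_norm_le_of_norm_deriv_right_le_deriv_boundary
    (f := fun y => F' y - F' a)
    (f' := fun t => ((n ! : ℝ)⁻¹ * (b - t) ^ n) • iteratedDerivWithin (n + 1) f (Set.Icc a b) t)
    (a := a) (b := b) (B := B) (B' := fun y => c * ((n + 1) * (b - y) ^ n))
    ?_ ?_ ?_ hB ?_ (Set.right_mem_Icc.2 hab.le)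
  · have hFb : F' b = f b := taylorWithinEval_self _ _ _ _
    have hBb : B b = K * (b - a) ^ (n + 1) / (n + 1)! := by
      simp only [hBdef, hcdef]
      rw [show b - b = 0 by ring, zero_pow (Nat.succ_ne_zero n)]
      ring
    have key' : ‖F' b - F' a‖ ≤ B b := key
    rw [hFb] at key'
    show ‖f b - F' a‖ ≤ K * (b - a) ^ (n + 1) / (n + 1)!
    calc ‖f b - F' a‖ ≤ B b := key'
      _ = _ := hBb
  · exact ((continuousOn_taylorWithinEval (uniqueDiffOn_Icc hab) hf.of_succ).sub
      continuousOn_const)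
  · intro x hx
    have h1 := (hFd x (Set.Ico_subset_Icc_self hx)).sub_const (F' a)
    exact h1.mono_of_mem_nhdsWithin (Icc_mem_nhdsGE_of_mem hx)
  · simp [hBdef]
  · intro x hx
    rw [norm_smul]
    have hD := hK x (Set.Ico_subset_Icc_self hx)
    have hbx : 0 ≤ b - x := by linarith [hx.2]
    have h1 : ‖(n ! : ℝ)⁻¹ * (b - x) ^ n‖ = (n ! : ℝ)⁻¹ * (b - x) ^ n := by
      rw [Real.norm_eq_abs, abs_of_nonneg (by positivity)]
    rw [h1]
    calc (n ! : ℝ)⁻¹ * (b - x) ^ n * ‖iteratedDerivWithin (n + 1) f (Set.Icc a b) x‖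
        ≤ (n ! : ℝ)⁻¹ * (b - x) ^ n * K := by
          exact mul_le_mul_of_nonneg_left hD (by positivity)
      _ = c * ((n + 1) * (b - x) ^ n) := by
          rw [hcdef, Nat.factorial_succ]
          push_cast
          field_simp

end AuxLemmas
open Set


set_option maxHeartbeats 1000000 in
/-- Taylor-type estimate (used in the proof of Theorem 5.1): if a holomorphic function
`g` on the sector `S(0,γ;E)` has derivatives bounded by `‖g⁽ⁱ⁾(ε)‖ ≤ C (i!)² μⁱ`, then
the limits `gᵢ = lim_{ε→0} g⁽ⁱ⁾(ε)/i!` exist and the Taylor remainders satisfy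
`‖g(ε) − ∑_{i<I} gᵢ εⁱ‖ ≤ C I! μᴵ |ε|ᴵ`; i.e. `∑ gᵢ εⁱ` is a Gevrey order-1 asymptotic
expansion of `g`. -/
theorem stmt_15 (ν : ℕ) (γ E C μ : ℝ)
    (hγ : 0 < γ) (hγ2 : γ < 2 * Real.pi) (hE : 0 < E) (hC : 0 < C) (hμ : 0 < μ)
    (g : ℂ → EuclideanSpace ℂ (Fin ν))
    (hg : DifferentiableOn ℂ g (sector γ E))
    (hbound : ∀ i : ℕ, ∀ ε ∈ sector γ E,
      ‖iteratedDeriv i g ε‖ ≤ C * (i.factorial : ℝ) ^ 2 * μ ^ i) :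
    ∃ gs : ℕ → EuclideanSpace ℂ (Fin ν),
      (∀ i : ℕ,
        Filter.Tendsto (fun ε => ((i.factorial : ℂ))⁻¹ • iteratedDeriv i g ε)
          (nhdsWithin 0 (sector γ E)) (nhds (gs i))) ∧
      ∀ I : ℕ, ∀ ε ∈ sector γ E,
        ‖g ε - ∑ i ∈ Finset.range I, ε ^ i • gs i‖ ≤
          C * (I.factorial : ℝ) * μ ^ I * ‖ε‖ ^ I := by
  have hγπ : γ / 2 < Real.pi := by linarith
  have hSopen : IsOpen (sector γ E) := sector_isOpen hγπ
  have hA : AnalyticOnNhd ℂ g (sector γ E) := hg.analyticOnNhd hSopen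
  have hAi : ∀ i : ℕ, AnalyticOnNhd ℂ (iteratedDeriv i g) (sector γ E) := by
    intro i
    induction i with
    | zero => simpa [iteratedDeriv_zero] using hA
    | succ m ih => rw [iteratedDeriv_succ]; exact ih.deriv
  have hD : ∀ i : ℕ, ∀ x ∈ sector γ E,
      HasDerivAt (iteratedDeriv i g) (iteratedDeriv (i + 1) g x) x := by
    intro i x hx
    have h1 := (hAi i x hx).differentiableAt.hasDerivAt
    rw [iteratedDeriv_succ]
    exact h1
  -- Lipschitz-type estimate on convex subsets
  have hlip : ∀ i : ℕ, ∀ s : Set ℂ, s ⊆ sector γ E → Convex ℝ s → ∀ x ∈ s, ∀ y ∈ s,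
      ‖iteratedDeriv i g y - iteratedDeriv i g x‖ ≤
        (C * ((i + 1).factorial : ℝ) ^ 2 * μ ^ (i + 1)) * ‖y - x‖ := by
    intro i s hs hconv x hx y hy
    exact hconv.norm_image_sub_le_of_norm_hasDerivWithin_le
      (fun z hz => (hD i z (hs hz)).hasDerivWithinAt)
      (fun z hz => hbound (i + 1) z (hs hz)) hx hy
  -- key distance estimate
  have hdist : ∀ i : ℕ, ∀ ε₁ ∈ sector γ E, ∀ ε₂ ∈ sector γ E,
      ‖iteratedDeriv i g ε₁ - iteratedDeriv i g ε₂‖ ≤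
        (C * ((i + 1).factorial : ℝ) ^ 2 * μ ^ (i + 1)) *
          (3 * (‖ε₁‖ + ‖ε₂‖)) := by
    intro i ε₁ h1 ε₂ h2
    set Ki := C * ((i + 1).factorial : ℝ) ^ 2 * μ ^ (i + 1) with hKi
    have hKipos : 0 < Ki := by positivity
    set r₁ := ‖ε₁‖ with hr₁
    set r₂ := ‖ε₂‖ with hr₂
    have hr₁0 : 0 < r₁ := h1.1
    have hr₂0 : 0 < r₂ := h2.1
    have hseg1 := segment_abs_sub_sector hγ hγπ h1
    have hseg2 := segment_abs_sub_sector hγ hγπ h2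
    have hsegr : segment ℝ ((r₁ : ℝ) : ℂ) ((r₂ : ℝ) : ℂ) ⊆ sector γ E := by
      rintro z ⟨a, b, ha, hb, hab, rfl⟩
      have hz : a • ((r₁ : ℝ) : ℂ) + b • ((r₂ : ℝ) : ℂ) = (((a * r₁ + b * r₂ : ℝ)) : ℂ) := by
        push_cast
        rw [Complex.real_smul, Complex.real_smul]
      rw [hz]
      refine real_mem_sector hγ ?_ ?_
      · rcases eq_or_lt_of_le ha with rfl | hapos
        · have hb1 : b = 1 := by linarith
          rw [hb1]; simpa using hr₂0
        · nlinarith [mul_pos hapos hr₁0, mul_nonneg hb hr₂0.le]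
      · rcases eq_or_lt_of_le ha with rfl | hapos
        · have hb1 : b = 1 := by linarith
          rw [hb1]; simpa using h2.2.1
        · nlinarith [mul_lt_mul_of_pos_left h1.2.1 hapos,
            mul_le_mul_of_nonneg_left h2.2.1.le hb]
    have est1 : ‖iteratedDeriv i g ε₁ - iteratedDeriv i g ((r₁ : ℝ) : ℂ)‖ ≤ Ki * (2 * r₁) := by
      have := hlip i _ hseg1 (convex_segment _ _)
        _ (right_mem_segment ℝ _ _) _ (left_mem_segment ℝ _ _)
      refine this.trans ?_
      have : ‖ε₁ - ((r₁ : ℝ) : ℂ)‖ ≤ 2 * r₁ := by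
        calc ‖ε₁ - ((r₁ : ℝ) : ℂ)‖ ≤ ‖ε₁‖ + ‖((r₁ : ℝ) : ℂ)‖ := norm_sub_le _ _
          _ = r₁ + r₁ := by
              rw [Complex.norm_real, Real.norm_eq_abs,
                abs_of_pos hr₁0]
          _ = 2 * r₁ := by ring
      nlinarith
    have est2 : ‖iteratedDeriv i g ((r₂ : ℝ) : ℂ) - iteratedDeriv i g ε₂‖ ≤ Ki * (2 * r₂) := by
      have := hlip i _ hseg2 (convex_segment _ _)
        _ (left_mem_segment ℝ _ _) _ (right_mem_segment ℝ _ _)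
      refine this.trans ?_
      have : ‖((r₂ : ℝ) : ℂ) - ε₂‖ ≤ 2 * r₂ := by
        calc ‖((r₂ : ℝ) : ℂ) - ε₂‖ ≤ ‖((r₂ : ℝ) : ℂ)‖ + ‖ε₂‖ := norm_sub_le _ _
          _ = r₂ + r₂ := by
              rw [Complex.norm_real, Real.norm_eq_abs,
                abs_of_pos hr₂0]
          _ = 2 * r₂ := by ring
      nlinarith
    have est3 : ‖iteratedDeriv i g ((r₁ : ℝ) : ℂ) - iteratedDeriv i g ((r₂ : ℝ) : ℂ)‖ ≤
        Ki * (r₁ + r₂) := by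
      have := hlip i _ hsegr (convex_segment _ _)
        _ (right_mem_segment ℝ _ _) _ (left_mem_segment ℝ _ _)
      refine this.trans ?_
      have : ‖((r₁ : ℝ) : ℂ) - ((r₂ : ℝ) : ℂ)‖ ≤ r₁ + r₂ := by
        rw [← Complex.ofReal_sub, Complex.norm_real, Real.norm_eq_abs]
        rw [abs_sub_comm] at *
        calc |r₂ - r₁| ≤ |r₂| + |r₁| := abs_sub _ _
          _ = r₁ + r₂ := by rw [abs_of_pos hr₁0, abs_of_pos hr₂0]; ring
      nlinarith
    calc ‖iteratedDeriv i g ε₁ - iteratedDeriv i g ε₂‖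
        ≤ ‖iteratedDeriv i g ε₁ - iteratedDeriv i g ((r₁ : ℝ) : ℂ)‖ +
          ‖iteratedDeriv i g ((r₁ : ℝ) : ℂ) - iteratedDeriv i g ((r₂ : ℝ) : ℂ)‖ +
          ‖iteratedDeriv i g ((r₂ : ℝ) : ℂ) - iteratedDeriv i g ε₂‖ :=
        by
          calc ‖iteratedDeriv i g ε₁ - iteratedDeriv i g ε₂‖
              ≤ ‖iteratedDeriv i g ε₁ - iteratedDeriv i g ((r₁ : ℝ) : ℂ)‖ +
                ‖iteratedDeriv i g ((r₁ : ℝ) : ℂ) - iteratedDeriv i g ε₂‖ :=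
              norm_sub_le_norm_sub_add_norm_sub _ _ _
            _ ≤ _ := by
                have := norm_sub_le_norm_sub_add_norm_sub
                  (iteratedDeriv i g ((r₁ : ℝ) : ℂ)) (iteratedDeriv i g ((r₂ : ℝ) : ℂ))
                  (iteratedDeriv i g ε₂)
                linarith
      _ ≤ Ki * (2 * r₁) + Ki * (r₁ + r₂) + Ki * (2 * r₂) := by
          gcongr
      _ = Ki * (3 * (r₁ + r₂)) := by ring
  -- the within-filter at 0 is nontrivial
  have h0cl : (0 : ℂ) ∈ closure (sector γ E) := by
    apply mem_closure_iff_seq_limit.2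
    refine ⟨fun n : ℕ => ((E / (n + 2) : ℝ) : ℂ), fun n => real_mem_sector hγ ?_ ?_, ?_⟩
    · positivity
    · have h2 : (1 : ℝ) < (n : ℝ) + 2 := by
        have : (0:ℝ) ≤ (n:ℝ) := Nat.cast_nonneg n
        linarith
      exact div_lt_self hE h2
    · have h1 : Tendsto (fun n : ℕ => E / ((n : ℝ) + 2)) atTop (nhds 0) := by
        apply Tendsto.div_atTop (tendsto_const_nhds)
        exact tendsto_atTop_add_const_right _ _ tendsto_natCast_atTop_atTop
      have h2 := (Complex.continuous_ofReal.tendsto 0).comp h1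
      rw [show Complex.ofReal 0 = 0 from Complex.ofReal_zero] at h2
      refine h2.congr fun n => ?_
      simp only [Function.comp_apply, Complex.ofReal_div]
  haveI hne : (nhdsWithin (0 : ℂ) (sector γ E)).NeBot :=
    mem_closure_iff_nhdsWithin_neBot.mp h0cl
  -- existence of limits
  have hlim : ∀ i : ℕ, ∃ L, Tendsto (iteratedDeriv i g)
      (nhdsWithin 0 (sector γ E)) (nhds L) := by
    intro i
    set Ki := C * ((i + 1).factorial : ℝ) ^ 2 * μ ^ (i + 1) with hKi
    have hKipos : 0 < Ki := by positivity
    have hcauchy : Cauchy (map (iteratedDeriv i g) (nhdsWithin 0 (sector γ E))) := by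
      rw [Metric.cauchy_iff]
      refine ⟨map_neBot, fun δ hδ => ?_⟩
      set ρ := δ / (6 * Ki + 1) with hρ
      have hρ0 : 0 < ρ := by positivity
      refine ⟨iteratedDeriv i g '' (sector γ E ∩ Metric.ball 0 ρ),
        image_mem_map (inter_mem_nhdsWithin _ (Metric.ball_mem_nhds 0 hρ0)), ?_⟩
      rintro x ⟨ε₁, ⟨hs1, hb1⟩, rfl⟩ y ⟨ε₂, ⟨hs2, hb2⟩, rfl⟩
      rw [dist_eq_norm]
      have hb1' : ‖ε₁‖ < ρ := by
        simpa [Complex.dist_eq] using hb1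
      have hb2' : ‖ε₂‖ < ρ := by
        simpa [Complex.dist_eq] using hb2
      calc ‖iteratedDeriv i g ε₁ - iteratedDeriv i g ε₂‖
          ≤ Ki * (3 * (‖ε₁‖ + ‖ε₂‖)) := hdist i ε₁ hs1 ε₂ hs2
        _ < δ := by
            have h6 : Ki * (3 * (‖ε₁‖ + ‖ε₂‖)) < Ki * (6 * ρ) := by
              have := norm_nonneg ε₁
              nlinarith
            have h61 : (0:ℝ) < 6 * Ki + 1 := by positivity
            have h7 : Ki * (6 * ρ) < δ := by
              rw [hρ, show Ki * (6 * (δ / (6 * Ki + 1))) = 6 * Ki * δ / (6 * Ki + 1) by ring,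
                div_lt_iff₀ h61]
              nlinarith
            linarith
    obtain ⟨L, hL⟩ := CompleteSpace.complete hcauchy
    exact ⟨L, hL⟩
  choose L hL using hlim
  refine ⟨fun i => ((i.factorial : ℂ))⁻¹ • L i, fun i => (hL i).const_smul _, ?_⟩
  intro I ε hε
  rcases Nat.eq_zero_or_pos I with rfl | hI
  · simpa [iteratedDeriv_zero] using hbound 0 ε hε
  obtain ⟨n, rfl⟩ : ∃ n, I = n + 1 := ⟨I - 1, (Nat.succ_pred_eq_of_pos hI).symm⟩
  set r := ‖ε‖ with hrdef
  have hr0 : 0 < r := hε.1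
  have hrE : r < E := hε.2.1
  have hray : ∀ t : ℝ, 0 < t → t ≤ 1 → ((t : ℂ) * ε) ∈ sector γ E := by
    intro t ht ht1
    refine ⟨?_, ?_, ?_⟩
    · rw [norm_mul, Complex.norm_real, Real.norm_eq_abs, abs_of_pos ht]
      positivity
    · rw [norm_mul, Complex.norm_real, Real.norm_eq_abs, abs_of_pos ht]
      nlinarith
    · rw [Complex.arg_real_mul ε ht]
      exact hε.2.2
  have hchain : ∀ m : ℕ, ∀ t : ℝ, 0 < t → t ≤ 1 →
      HasDerivAt (fun y : ℝ => iteratedDeriv m g ((y : ℂ) * ε))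
        (ε • iteratedDeriv (m + 1) g ((t : ℂ) * ε)) t := by
    intro m t ht ht1
    have hz := hD m _ (hray t ht ht1)
    have hc : HasDerivAt (fun y : ℝ => (y : ℂ) * ε) ε t := by
      simpa using (Complex.ofRealCLM.hasDerivAt (x := t)).mul_const ε
    have := (hz.hasFDerivAt.restrictScalars ℝ).comp_hasDerivAt t hc
    exact this
  set φ : ℝ → EuclideanSpace ℂ (Fin ν) := fun t => g ((t : ℂ) * ε) with hφdef
  have hδstuff : ∀ δ : ℝ, δ ∈ Set.Ioo (0 : ℝ) 1 →
      ‖g ε - ∑ k ∈ Finset.range (n + 1),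
        ((k.factorial : ℝ)⁻¹ * (1 - δ) ^ k) • ε ^ k • iteratedDeriv k g ((δ : ℂ) * ε)‖ ≤
        C * ((n + 1).factorial : ℝ) * μ ^ (n + 1) * r ^ (n + 1) := by
    intro δ hδIoo
    obtain ⟨hδ0, hδ1⟩ := hδIoo
    have hunique := uniqueDiffOn_Icc hδ1
    have hmemT : ∀ t ∈ Set.Icc δ 1, (t : ℂ) * ε ∈ sector γ E := fun t ht =>
      hray t (lt_of_lt_of_le hδ0 ht.1) ht.2
    have hφcd : ContDiffOn ℝ (n + 1) φ (Set.Icc δ 1) := by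
      intro t ht
      have h1 : ContDiffAt ℂ (n + 1) g ((t : ℂ) * ε) := (hA _ (hmemT t ht)).contDiffAt
      have h2 : ContDiffAt ℝ (n + 1) (fun y : ℝ => (y : ℂ) * ε) t :=
        ((Complex.ofRealCLM.contDiff.mul contDiff_const).of_le le_top).contDiffAt
      exact ((h1.restrict_scalars ℝ).comp t h2).contDiffWithinAt
    have hIDW : ∀ m : ℕ, ∀ t ∈ Set.Icc δ 1,
        iteratedDerivWithin m φ (Set.Icc δ 1) t = ε ^ m • iteratedDeriv m g ((t : ℂ) * ε) := by
      intro m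
      induction m with
      | zero => intro t ht; simp [hφdef]
      | succ m ih =>
        intro t ht
        rw [iteratedDerivWithin_succ]
        have heq : Set.EqOn (iteratedDerivWithin m φ (Set.Icc δ 1))
            (fun y => ε ^ m • iteratedDeriv m g ((y : ℂ) * ε)) (Set.Icc δ 1) :=
          fun y hy => ih y hy
        rw [derivWithin_congr heq (ih t ht)]
        have hder : HasDerivAt (fun y : ℝ => ε ^ m • iteratedDeriv m g ((y : ℂ) * ε))
            (ε ^ (m + 1) • iteratedDeriv (m + 1) g ((t : ℂ) * ε)) t := by
          have := (hchain m t (lt_of_lt_of_le hδ0 ht.1) ht.2).const_smul (ε ^ m)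
          rwa [smul_smul, ← pow_succ] at this
        rw [hder.hasDerivWithinAt.derivWithin (hunique t ht)]
    have hKb : ∀ y ∈ Set.Icc δ 1, ‖iteratedDerivWithin (n + 1) φ (Set.Icc δ 1) y‖ ≤
        C * ((n + 1).factorial : ℝ) ^ 2 * μ ^ (n + 1) * r ^ (n + 1) := by
      intro y hy
      rw [hIDW (n + 1) y hy, norm_smul, norm_pow]
      calc ‖ε‖ ^ (n + 1) * ‖iteratedDeriv (n + 1) g ((y : ℂ) * ε)‖
          ≤ ‖ε‖ ^ (n + 1) * (C * ((n + 1).factorial : ℝ) ^ 2 * μ ^ (n + 1)) :=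
            mul_le_mul_of_nonneg_left (hbound (n + 1) _ (hmemT y hy)) (by positivity)
        _ = C * ((n + 1).factorial : ℝ) ^ 2 * μ ^ (n + 1) * r ^ (n + 1) := by
            rw [hrdef]; ring
    have htay := taylor_bound_sharp hδ1 hφcd hKb
    have hφ1 : φ 1 = g ε := by simp [hφdef]
    have hTP : taylorWithinEval φ n (Set.Icc δ 1) δ 1 =
        ∑ k ∈ Finset.range (n + 1),
          ((k.factorial : ℝ)⁻¹ * (1 - δ) ^ k) • ε ^ k • iteratedDeriv k g ((δ : ℂ) * ε) := by
      rw [taylor_within_apply]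
      refine Finset.sum_congr rfl fun k hk => ?_
      rw [hIDW k δ (Set.left_mem_Icc.2 hδ1.le)]
    rw [hφ1, hTP] at htay
    refine htay.trans ?_
    have hpow : (1 - δ) ^ (n + 1) ≤ 1 := pow_le_one₀ (by linarith) (by linarith)
    have hfacne : ((n + 1).factorial : ℝ) ≠ 0 := Nat.cast_ne_zero.2 (Nat.factorial_ne_zero _)
    calc C * ((n + 1).factorial : ℝ) ^ 2 * μ ^ (n + 1) * r ^ (n + 1) * (1 - δ) ^ (n + 1) /
          ((n + 1).factorial : ℝ)
        ≤ C * ((n + 1).factorial : ℝ) ^ 2 * μ ^ (n + 1) * r ^ (n + 1) * 1 /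
          ((n + 1).factorial : ℝ) := by gcongr
      _ = C * ((n + 1).factorial : ℝ) * μ ^ (n + 1) * r ^ (n + 1) := by
          field_simp
  -- pass to the limit δ → 0⁺
  haveI hne2 : (nhdsWithin (0 : ℝ) (Set.Ioo (0 : ℝ) 1)).NeBot := by
    apply mem_closure_iff_nhdsWithin_neBot.mp
    rw [closure_Ioo (zero_ne_one)]
    exact ⟨le_rfl, zero_le_one⟩
  have htend0 : Tendsto (fun δ : ℝ => (δ : ℂ) * ε) (nhdsWithin 0 (Set.Ioo (0 : ℝ) 1))
      (nhdsWithin 0 (sector γ E)) := by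
    rw [tendsto_nhdsWithin_iff]
    constructor
    · have hco : Continuous fun δ : ℝ => (δ : ℂ) * ε :=
        Complex.continuous_ofReal.mul continuous_const
      have h5 : Tendsto (fun δ : ℝ => (δ : ℂ) * ε) (nhdsWithin 0 (Set.Ioo (0 : ℝ) 1))
          (nhds (((0 : ℝ) : ℂ) * ε)) := (hco.tendsto 0).mono_left nhdsWithin_le_nhds
      simpa using h5
    · filter_upwards [self_mem_nhdsWithin] with δ hδ
      exact hray δ hδ.1 hδ.2.le
  have hsumtend : Tendsto (fun δ : ℝ => ∑ k ∈ Finset.range (n + 1),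
      ((k.factorial : ℝ)⁻¹ * (1 - δ) ^ k) • ε ^ k • iteratedDeriv k g ((δ : ℂ) * ε))
      (nhdsWithin 0 (Set.Ioo (0 : ℝ) 1))
      (nhds (∑ k ∈ Finset.range (n + 1), ε ^ k • ((k.factorial : ℂ))⁻¹ • L k)) := by
    apply tendsto_finset_sum
    intro k hk
    have h1 : Tendsto (fun δ : ℝ => iteratedDeriv k g ((δ : ℂ) * ε))
        (nhdsWithin 0 (Set.Ioo (0 : ℝ) 1)) (nhds (L k)) := (hL k).comp htend0
    have h2 : Tendsto (fun δ : ℝ => (k.factorial : ℝ)⁻¹ * (1 - δ) ^ k)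
        (nhdsWithin 0 (Set.Ioo (0 : ℝ) 1)) (nhds ((k.factorial : ℝ)⁻¹)) := by
      have hco : Continuous fun δ : ℝ => (k.factorial : ℝ)⁻¹ * (1 - δ) ^ k :=
        continuous_const.mul ((continuous_const.sub continuous_id).pow k)
      have h5 : Tendsto (fun δ : ℝ => (k.factorial : ℝ)⁻¹ * (1 - δ) ^ k)
          (nhdsWithin 0 (Set.Ioo (0 : ℝ) 1)) (nhds ((k.factorial : ℝ)⁻¹ * (1 - 0) ^ k)) :=
        (hco.tendsto 0).mono_left nhdsWithin_le_nhds
      simpa using h5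
    have h3 := h2.smul (h1.const_smul (ε ^ k))
    have hval : ((k.factorial : ℝ)⁻¹ : ℝ) • (ε ^ k • L k) =
        ε ^ k • ((k.factorial : ℂ))⁻¹ • L k := by
      rw [smul_comm]
      congr 1
      rw [← Complex.coe_smul]
      congr 1
      push_cast
      ring
    rwa [hval] at h3
  have hnorm : Tendsto (fun δ : ℝ => ‖g ε - ∑ k ∈ Finset.range (n + 1),
      ((k.factorial : ℝ)⁻¹ * (1 - δ) ^ k) • ε ^ k • iteratedDeriv k g ((δ : ℂ) * ε)‖)
      (nhdsWithin 0 (Set.Ioo (0 : ℝ) 1))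
      (nhds ‖g ε - ∑ k ∈ Finset.range (n + 1), ε ^ k • ((k.factorial : ℂ))⁻¹ • L k‖) :=
    (tendsto_const_nhds.sub hsumtend).norm
  exact le_of_tendsto hnorm (by
    filter_upwards [self_mem_nhdsWithin] with δ hδ using hδstuff δ hδ)
end

section
/- Let c, C, ρ, ρ₁ be positive reals and set σ₁ = ρ₁ρ/(ρ + 4cC). Then the function φ(z) = (ρ/2)·(1 − √((1 − z/σ₁)/(1 − z/ρ₁))), defined with the principal branch of the square root, is holomorphic on the disc D_{σ₁} = {z : |z| < σ₁}, satisfies φ(0) = 0, and solves the algebraic equation φ(z)·(1 − φ(z)/ρ) = cC·(z/ρ₁)/(1 − z/ρ₁) for every z ∈ D_{σ₁}. -/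
open Metric

lemma div_slitPlane {a b : ℂ} (ha : 0 < a.re) (hb : 0 < b.re) :
    a / b ∈ Complex.slitPlane := by
  have hb0 : b ≠ 0 := fun h => by simp [h] at hb
  by_contra h
  rw [Complex.mem_slitPlane_iff] at h
  push_neg at h
  have h1 : (a / b).re ≤ 0 := h.1
  have h2 : (a / b).im = 0 := h.2
  have : a = (a / b) * b := by field_simp
  have hre : a.re = (a / b).re * b.re - (a / b).im * b.im := by
    nth_rewrite 1 [this]; exact Complex.mul_re _ _
  rw [h2] at hre
  nlinarith

/-- Remark 3.1: the majorant `φ(z) = (ρ/2)(1 − √((1 − z/σ₁)/(1 − z/ρ₁)))` (principal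
square root), with `σ₁ = ρ₁ρ/(ρ + 4cC)`, is holomorphic on `D_{σ₁}`, vanishes at `0`,
and solves `φ(1 − φ/ρ) = cC (z/ρ₁)/(1 − z/ρ₁)` there. -/
theorem stmt_18 (c C ρ ρ₁ : ℝ) (hc : 0 < c) (hC : 0 < C) (hρ : 0 < ρ) (hρ₁ : 0 < ρ₁)
    (σ₁ : ℝ) (hσ₁ : σ₁ = ρ₁ * ρ / (ρ + 4 * c * C))
    (φ : ℂ → ℂ)
    (hφ : φ = fun z : ℂ =>
      (ρ / 2 : ℂ) * (1 - ((1 - z / (σ₁ : ℂ)) / (1 - z / (ρ₁ : ℂ))) ^ ((1 : ℂ) / 2))) :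
    DifferentiableOn ℂ φ (Metric.ball 0 σ₁) ∧ φ 0 = 0 ∧
      ∀ z ∈ Metric.ball (0 : ℂ) σ₁,
        φ z * (1 - φ z / (ρ : ℂ)) = (c : ℂ) * (C : ℂ) * (z / (ρ₁ : ℂ)) / (1 - z / (ρ₁ : ℂ)) := by
  have hden : 0 < ρ + 4 * c * C := by positivity
  have hσpos : 0 < σ₁ := by rw [hσ₁]; positivity
  have hσle : σ₁ ≤ ρ₁ := by
    rw [hσ₁, div_le_iff₀ hden]
    nlinarith [mul_pos hρ₁ (by positivity : (0:ℝ) < 4 * c * C)]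
  have hσC : (σ₁ : ℂ) ≠ 0 := by exact_mod_cast hσpos.ne'
  have hρ₁C : (ρ₁ : ℂ) ≠ 0 := by exact_mod_cast hρ₁.ne'
  -- real parts
  have key : ∀ z ∈ Metric.ball (0 : ℂ) σ₁,
      0 < ((1 : ℂ) - z / (σ₁ : ℂ)).re ∧ 0 < ((1 : ℂ) - z / (ρ₁ : ℂ)).re := by
    intro z hz
    rw [mem_ball_zero_iff] at hz
    have hre : |z.re| ≤ ‖z‖ := Complex.abs_re_le_norm z
    constructor
    · have : (z / (σ₁ : ℂ)).re = z.re / σ₁ := by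
        rw [Complex.div_ofReal_re]
      simp only [Complex.sub_re, Complex.one_re, this]
      rw [sub_pos, div_lt_one hσpos]
      calc z.re ≤ |z.re| := le_abs_self _
        _ ≤ ‖z‖ := hre
        _ < σ₁ := hz
    · have : (z / (ρ₁ : ℂ)).re = z.re / ρ₁ := by
        rw [Complex.div_ofReal_re]
      simp only [Complex.sub_re, Complex.one_re, this]
      rw [sub_pos, div_lt_one hρ₁]
      calc z.re ≤ |z.re| := le_abs_self _
        _ ≤ ‖z‖ := hre
        _ < σ₁ := hz
        _ ≤ ρ₁ := hσle
  refine ⟨?_, ?_, ?_⟩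
  · rw [hφ]
    intro z hz
    obtain ⟨ha, hb⟩ := key z hz
    have hslit := div_slitPlane ha hb
    have hb0 : (1 : ℂ) - z / (ρ₁ : ℂ) ≠ 0 := fun h => by simp [h] at hb
    apply DifferentiableAt.differentiableWithinAt
    apply DifferentiableAt.const_mul
    apply DifferentiableAt.sub (differentiableAt_const _)
    have hf : DifferentiableAt ℂ
        (fun w : ℂ => ((1 : ℂ) - w / (σ₁ : ℂ)) / ((1 : ℂ) - w / (ρ₁ : ℂ))) z :=
      ((differentiableAt_const _).sub
      ((differentiableAt_id).div_const _)).div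
      ((differentiableAt_const _).sub ((differentiableAt_id).div_const _)) hb0
    exact (hf.cpow
      (differentiableAt_const _) hslit)
  · rw [hφ]
    norm_num [Complex.one_cpow]
  · intro z hz
    obtain ⟨ha, hb⟩ := key z hz
    have ha0 : (1 : ℂ) - z / (σ₁ : ℂ) ≠ 0 := fun h => by simp [h] at ha
    have hb0 : (1 : ℂ) - z / (ρ₁ : ℂ) ≠ 0 := fun h => by simp [h] at hb
    have hw0 : ((1 : ℂ) - z / (σ₁ : ℂ)) / ((1 : ℂ) - z / (ρ₁ : ℂ)) ≠ 0 :=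
      div_ne_zero ha0 hb0
    set s := (((1 : ℂ) - z / (σ₁ : ℂ)) / ((1 : ℂ) - z / (ρ₁ : ℂ))) ^ ((1 : ℂ) / 2) with hs
    have hsq : s * s = ((1 : ℂ) - z / (σ₁ : ℂ)) / ((1 : ℂ) - z / (ρ₁ : ℂ)) := by
      rw [hs, ← Complex.cpow_add _ _ hw0]
      norm_num
    rw [hφ]
    simp only
    rw [← hs]
    have hρC : (ρ : ℂ) ≠ 0 := by exact_mod_cast hρ.ne'
    have h1 : (ρ / 2 : ℂ) * (1 - s) * (1 - (ρ / 2 : ℂ) * (1 - s) / (ρ : ℂ)) =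
        (ρ / 4 : ℂ) * (1 - s * s) := by
      field_simp
      ring
    rw [h1, hsq]
    have hreal : (1:ℝ)/σ₁ - 1/ρ₁ = 4*c*C/(ρ₁*ρ) := by
      rw [hσ₁]; field_simp; ring
    have hrelC : (1:ℂ)/(σ₁:ℂ) - 1/(ρ₁:ℂ) = 4*(c:ℂ)*(C:ℂ)/((ρ₁:ℂ)*(ρ:ℂ)) := by
      exact_mod_cast congrArg (Complex.ofReal) hreal
    rw [one_sub_div hb0]
    have hnum : ((ρ:ℂ)/4) * ((1 - z/(ρ₁:ℂ)) - (1 - z/(σ₁:ℂ))) = (c:ℂ)*(C:ℂ)*(z/(ρ₁:ℂ)) := by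
      have he : (1 - z/(ρ₁:ℂ)) - (1 - z/(σ₁:ℂ)) = z * ((1:ℂ)/(σ₁:ℂ) - 1/(ρ₁:ℂ)) := by ring
      rw [he, hrelC]
      field_simp
    calc ((ρ:ℂ)/4) * (((1 - z/(ρ₁:ℂ)) - (1 - z/(σ₁:ℂ)))/(1 - z/(ρ₁:ℂ)))
        = (((ρ:ℂ)/4) * ((1 - z/(ρ₁:ℂ)) - (1 - z/(σ₁:ℂ))))/(1 - z/(ρ₁:ℂ)) := by
          rw [mul_div_assoc]
      _ = (c:ℂ)*(C:ℂ)*(z/(ρ₁:ℂ))/(1 - z/(ρ₁:ℂ)) := by rw [hnum]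
end
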